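/- arXiv:2603.23434 — 7 statements merged into one kernel-verified Lean document; each statement's English description precedes it below -/
import Mathlib

section
/- The Petersen graph has no packing (1,1,2,2)-coloring: its vertex set cannot be partitioned into two independent sets and two 2-independent sets. -/
open SimpleGraph

variable {V : Type*}

/-- A set `S` is `i`-independent in `G` if distinct vertices of `S` are at
graph distance at least `i+1` (unreachable pairs have `edist = ⊤`). -/
def IsIndepOfOrder (G : SimpleGraph V) (i : ℕ) (S : Set V) : Prop :=
  ∀ ⦃x⦄, x ∈ S → ∀ ⦃y⦄, y ∈ S → x ≠ y → (i + 1 : ℕ∞) ≤ G.edist x y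

/-- A packing `(1,1,2,2)`-coloring of `G`. -/
def HasPacking1122 (G : SimpleGraph V) : Prop :=
  ∃ V1 V2 V3 V4 : Set V,
    (∀ v, v ∈ V1 ∨ v ∈ V2 ∨ v ∈ V3 ∨ v ∈ V4) ∧
    Disjoint V1 V2 ∧ Disjoint V1 V3 ∧ Disjoint V1 V4 ∧
    Disjoint V2 V3 ∧ Disjoint V2 V4 ∧ Disjoint V3 V4 ∧
    IsIndepOfOrder G 1 V1 ∧ IsIndepOfOrder G 1 V2 ∧
    IsIndepOfOrder G 2 V3 ∧ IsIndepOfOrder G 2 V4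

/-- The Petersen graph as the Kneser graph `K(5,2)`. -/
def petersenGraph : SimpleGraph {s : Finset (Fin 5) // s.card = 2} where
  Adj a b := Disjoint a.1 b.1
  symm := ⟨fun a b h => h.symm⟩
  loopless := ⟨by
    intro a h
    rw [disjoint_self] at h
    have := a.2
    simp [h] at this⟩

abbrev PetV := {s : Finset (Fin 5) // s.card = 2}

lemma pet_common_nbr : ∀ x y : PetV, (x.1 ∩ y.1) ≠ ∅ →
    ∃ z : PetV, x.1 ∩ z.1 = ∅ ∧ z.1 ∩ y.1 = ∅ := by decide

set_option synthInstance.maxSize 2000 in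
set_option synthInstance.maxHeartbeats 2000000 in
set_option maxHeartbeats 2000000 in
lemma pet_cycle_exists : ∀ a b : PetV,
    ∃ c1 : PetV, c1 ≠ a ∧ c1 ≠ b ∧
    ∃ c2 : PetV, c2 ≠ a ∧ c2 ≠ b ∧ c1.1 ∩ c2.1 = ∅ ∧
    ∃ c3 : PetV, c3 ≠ a ∧ c3 ≠ b ∧ c2.1 ∩ c3.1 = ∅ ∧
    ∃ c4 : PetV, c4 ≠ a ∧ c4 ≠ b ∧ c3.1 ∩ c4.1 = ∅ ∧
    ∃ c5 : PetV, c5 ≠ a ∧ c5 ≠ b ∧ c4.1 ∩ c5.1 = ∅ ∧ c5.1 ∩ c1.1 = ∅ := by decide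

lemma pet_adj_iff {x y : PetV} : petersenGraph.Adj x y ↔ x.1 ∩ y.1 = ∅ :=
  Finset.disjoint_iff_inter_eq_empty

lemma pet_edist_le_two (x y : PetV) : petersenGraph.edist x y ≤ 2 := by
  by_cases hxy : x.1 ∩ y.1 = ∅
  · calc petersenGraph.edist x y ≤ 1 := le_of_eq (edist_eq_one_iff_adj.mpr (pet_adj_iff.mpr hxy))
      _ ≤ 2 := by norm_num
  · obtain ⟨z, hxz, hzy⟩ := pet_common_nbr x y hxy
    calc petersenGraph.edist x y ≤ petersenGraph.edist x z + petersenGraph.edist z y :=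
          SimpleGraph.edist_triangle
      _ = 1 + 1 := by
          rw [edist_eq_one_iff_adj.mpr (pet_adj_iff.mpr hxz),
            edist_eq_one_iff_adj.mpr (pet_adj_iff.mpr hzy)]
      _ = 2 := by norm_num

lemma pet_subsingleton {S : Set PetV} (h : IsIndepOfOrder petersenGraph 2 S) :
    ∃ a : PetV, ∀ v ∈ S, v = a := by
  rcases Set.eq_empty_or_nonempty S with hS | ⟨a, ha⟩
  · exact ⟨⟨{0, 1}, by decide⟩, by simp [hS]⟩
  · refine ⟨a, fun v hv => ?_⟩
    by_contra hne
    have h1 := h hv ha hne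
    have h2 := pet_edist_le_two v a
    have : ((2 : ℕ) + 1 : ℕ∞) ≤ 2 := le_trans h1 h2
    norm_num at this

lemma pet_not_both {S : Set PetV} (h : IsIndepOfOrder petersenGraph 1 S)
    {x y : PetV} (hadj : petersenGraph.Adj x y) (hx : x ∈ S) (hy : y ∈ S) : False := by
  have h1 := h hx hy hadj.ne
  rw [edist_eq_one_iff_adj.mpr hadj] at h1
  norm_num at h1

lemma pet_alternate (A B : Set PetV)
    (hA : IsIndepOfOrder petersenGraph 1 A) (hB : IsIndepOfOrder petersenGraph 1 B)
    {c1 c2 c3 c4 c5 : PetV}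
    (m1 : c1 ∈ A) (m2 : c2 ∈ A ∨ c2 ∈ B) (m3 : c3 ∈ A ∨ c3 ∈ B)
    (m4 : c4 ∈ A ∨ c4 ∈ B) (m5 : c5 ∈ A ∨ c5 ∈ B)
    (a12 : petersenGraph.Adj c1 c2) (a23 : petersenGraph.Adj c2 c3)
    (a34 : petersenGraph.Adj c3 c4) (a45 : petersenGraph.Adj c4 c5)
    (a51 : petersenGraph.Adj c5 c1) : False := by
  rcases m2 with m2 | m2
  · exact pet_not_both hA a12 m1 m2
  rcases m3 with m3 | m3
  swap
  · exact pet_not_both hB a23 m2 m3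
  rcases m4 with m4 | m4
  · exact pet_not_both hA a34 m3 m4
  rcases m5 with m5 | m5
  swap
  · exact pet_not_both hB a45 m4 m5
  exact pet_not_both hA a51 m5 m1

/-- The Petersen graph has no packing `(1,1,2,2)`-coloring. -/
theorem petersen_no_packing_1122 : ¬ HasPacking1122 petersenGraph := by
  rintro ⟨V1, V2, V3, V4, hcov, d12, d13, d14, d23, d24, d34, h1, h2, h3, h4⟩
  obtain ⟨a, ha⟩ := pet_subsingleton h3
  obtain ⟨b, hb⟩ := pet_subsingleton h4
  obtain ⟨c1, n1a, n1b, c2, n2a, n2b, e12, c3, n3a, n3b, e23,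
    c4, n4a, n4b, e34, c5, n5a, n5b, e45, e51⟩ := pet_cycle_exists a b
  have mem : ∀ c : PetV, c ≠ a → c ≠ b → c ∈ V1 ∨ c ∈ V2 := by
    intro c hca hcb
    rcases hcov c with h | h | h | h
    · exact Or.inl h
    · exact Or.inr h
    · exact absurd (ha c h) hca
    · exact absurd (hb c h) hcb
  have a12 := pet_adj_iff.mpr e12
  have a23 := pet_adj_iff.mpr e23
  have a34 := pet_adj_iff.mpr e34
  have a45 := pet_adj_iff.mpr e45
  have a51 := pet_adj_iff.mpr e51
  rcases mem c1 n1a n1b with m1 | m1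
  · exact pet_alternate V1 V2 h1 h2 m1 (mem c2 n2a n2b) (mem c3 n3a n3b)
      (mem c4 n4a n4b) (mem c5 n5a n5b) a12 a23 a34 a45 a51
  · exact pet_alternate V2 V1 h2 h1 m1 ((mem c2 n2a n2b).symm) ((mem c3 n3a n3b).symm)
      ((mem c4 n4a n4b).symm) ((mem c5 n5a n5b).symm) a12 a23 a34 a45 a51
end

section
/- If a finite simple graph G admits a packing (1,1,2,2)-coloring, then the 1-subdivision of G admits a packing (1,2,3,4,5)-coloring. -/
open SimpleGraph

variable {V : Type*}

/-- The 1-subdivision of `G`: each edge `uv` is replaced by the path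
`u - x_{uv} - v` through a new vertex `x_{uv}` indexed by the edge. -/
def oneSubdivision (G : SimpleGraph V) : SimpleGraph (V ⊕ G.edgeSet) where
  Adj x y :=
    ∃ (u : V) (e : G.edgeSet), u ∈ (e : Sym2 V) ∧
      ((x = Sum.inl u ∧ y = Sum.inr e) ∨ (x = Sum.inr e ∧ y = Sum.inl u))
  symm := by
    constructor
    rintro x y ⟨u, e, hue, h | h⟩
    · exact ⟨u, e, hue, Or.inr ⟨h.2, h.1⟩⟩
    · exact ⟨u, e, hue, Or.inl ⟨h.2, h.1⟩⟩
  loopless := by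
    constructor
    rintro x ⟨u, e, hue, ⟨h1, h2⟩ | ⟨h1, h2⟩⟩ <;> simp_all

/-- A packing `(1,2,3,4,5)`-coloring of `G`. -/
def HasPacking12345 (G : SimpleGraph V) : Prop :=
  ∃ W : Fin 5 → Set V,
    (∀ v, ∃ i, v ∈ W i) ∧
    (∀ i j, i ≠ j → Disjoint (W i) (W j)) ∧
    (∀ i : Fin 5, IsIndepOfOrder G ((i : ℕ) + 1) (W i))

lemma key_proj (G : SimpleGraph V) :
    ∀ (n : ℕ) (u v : V) (p : (oneSubdivision G).Walk (Sum.inl u) (Sum.inl v)),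
      p.length ≤ n → ∃ q : G.Walk u v, 2 * q.length ≤ p.length := by
  intro n
  induction n with
  | zero =>
    intro u v p hp
    have h0 : p.length = 0 := Nat.le_zero.mp hp
    have huv : u = v := Sum.inl.inj (SimpleGraph.Walk.eq_of_length_eq_zero h0)
    subst huv
    exact ⟨SimpleGraph.Walk.nil, by simp⟩
  | succ n ih =>
    intro u v p hp
    cases p with
    | nil =>
      exact ⟨SimpleGraph.Walk.nil, by simp⟩
    | @cons _ w _ h p' =>
      obtain ⟨a, e, hae, ⟨h1, h2⟩ | ⟨h1, h2⟩⟩ := h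
      · -- inl u = inl a, w = inr e
        have hua : u = a := Sum.inl.inj h1
        subst hua
        subst h2
        cases p' with
        | @cons _ z _ h2 p'' =>
          obtain ⟨b, f, hbf, ⟨g1, g2⟩ | ⟨g1, g2⟩⟩ := h2
          · exact absurd g1 (by simp)
          · have hef : e = f := Sum.inr.inj g1
            subst hef
            subst g2
            have hlen : p''.length ≤ n := by
              change p''.length + 1 + 1 ≤ n + 1 at hp
              omega
            obtain ⟨q, hq⟩ := ih b v p'' hlen
            by_cases hub : u = b
            · subst hub
              exact ⟨q, by change 2 * q.length ≤ p''.length + 1 + 1; omega⟩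
            · have hedge : (e : Sym2 V) = s(u, b) :=
                (Sym2.mem_and_mem_iff hub).mp ⟨hae, hbf⟩
              have hadj : G.Adj u b := by
                have := e.2
                rw [hedge] at this
                exact this
              refine ⟨SimpleGraph.Walk.cons hadj q, ?_⟩
              change 2 * (q.length + 1) ≤ p''.length + 1 + 1
              omega
      · exact absurd h1 (by simp)

lemma edist_subdivision_le (G : SimpleGraph V) (u v : V) :
    2 * G.edist u v ≤ (oneSubdivision G).edist (Sum.inl u) (Sum.inl v) := by
  by_cases htop : (oneSubdivision G).edist (Sum.inl u) (Sum.inl v) = ⊤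
  · rw [htop]; exact le_top
  · obtain ⟨p, hp⟩ := SimpleGraph.exists_walk_of_edist_ne_top htop
    obtain ⟨q, hq⟩ := key_proj G p.length u v p le_rfl
    calc 2 * G.edist u v ≤ 2 * (q.length : ℕ∞) := by
          exact mul_le_mul_right (SimpleGraph.edist_le q) 2
      _ = ((2 * q.length : ℕ) : ℕ∞) := by push_cast; ring
      _ ≤ (p.length : ℕ∞) := by exact_mod_cast hq
      _ = _ := hp

lemma indep_lift (G : SimpleGraph V) {S : Set V} {k m : ℕ}
    (hS : IsIndepOfOrder G k S) (hm : (m + 1 : ℕ∞) ≤ 2 * (k + 1)) :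
    IsIndepOfOrder (oneSubdivision G) m (Sum.inl '' S) := by
  rintro x ⟨u, hu, rfl⟩ y ⟨v, hv, rfl⟩ hxy
  have huv : u ≠ v := fun h => hxy (by rw [h])
  calc (m + 1 : ℕ∞) ≤ 2 * (k + 1) := hm
    _ ≤ 2 * G.edist u v := mul_le_mul_right (hS hu hv huv) 2
    _ ≤ _ := edist_subdivision_le G u v

lemma indep_inr (G : SimpleGraph V) :
    IsIndepOfOrder (oneSubdivision G) 1 (Set.range Sum.inr) := by
  rintro x ⟨e, rfl⟩ y ⟨f, rfl⟩ hxy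
  have hnadj : ¬ (oneSubdivision G).Adj (Sum.inr e) (Sum.inr f) := by
    rintro ⟨a, g, hag, ⟨h1, h2⟩ | ⟨h1, h2⟩⟩ <;> simp_all
  have h0 : (oneSubdivision G).edist (Sum.inr e) (Sum.inr f) ≠ 0 :=
    (SimpleGraph.edist_pos_of_ne hxy).ne'
  have h1 : (oneSubdivision G).edist (Sum.inr e) (Sum.inr f) ≠ 1 :=
    fun hh => hnadj (SimpleGraph.edist_eq_one_iff_adj.mp hh)
  have : (1 : ℕ∞) < (oneSubdivision G).edist (Sum.inr e) (Sum.inr f) :=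
    lt_of_le_of_ne (ENat.one_le_iff_ne_zero.mpr h0) (Ne.symm h1)
  calc ((1 : ℕ) + 1 : ℕ∞) = 2 := by norm_num
    _ ≤ _ := Order.add_one_le_of_lt this

theorem aux_subdivision_packing
    {V : Type*} [Fintype V] (G : SimpleGraph V)
    (h : ∃ V1 V2 V3 V4 : Set V,
    (∀ v, v ∈ V1 ∨ v ∈ V2 ∨ v ∈ V3 ∨ v ∈ V4) ∧
    Disjoint V1 V2 ∧ Disjoint V1 V3 ∧ Disjoint V1 V4 ∧
    Disjoint V2 V3 ∧ Disjoint V2 V4 ∧ Disjoint V3 V4 ∧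
    IsIndepOfOrder G 1 V1 ∧ IsIndepOfOrder G 1 V2 ∧
    IsIndepOfOrder G 2 V3 ∧ IsIndepOfOrder G 2 V4) :
    ∃ W : Fin 5 → Set (V ⊕ G.edgeSet),
    (∀ v, ∃ i, v ∈ W i) ∧
    (∀ i j, i ≠ j → Disjoint (W i) (W j)) ∧
    (∀ i : Fin 5, IsIndepOfOrder (oneSubdivision G) ((i : ℕ) + 1) (W i)) := by
  obtain ⟨V1, V2, V3, V4, hcov, d12, d13, d14, d23, d24, d34, i1, i2, i3, i4⟩ := h
  refine ⟨![Set.range Sum.inr, Sum.inl '' V1, Sum.inl '' V2, Sum.inl '' V3, Sum.inl '' V4],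
    ?_, ?_, ?_⟩
  · rintro (v | e)
    · rcases hcov v with hv | hv | hv | hv
      · exact ⟨1, ⟨v, hv, rfl⟩⟩
      · exact ⟨2, ⟨v, hv, rfl⟩⟩
      · exact ⟨3, ⟨v, hv, rfl⟩⟩
      · exact ⟨4, ⟨v, hv, rfl⟩⟩
    · exact ⟨0, ⟨e, rfl⟩⟩
  · have hinl : ∀ (S : Set V), Disjoint (Set.range (Sum.inr : G.edgeSet → V ⊕ G.edgeSet)) (Sum.inl '' S) := by
      intro S
      rw [Set.disjoint_left]
      rintro _ ⟨e, rfl⟩ ⟨u, _, h⟩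
      simp at h
    have himg : ∀ (S T : Set V), Disjoint S T → Disjoint ((Sum.inl '' S : Set (V ⊕ G.edgeSet))) (Sum.inl '' T) := by
      intro S T hST
      exact (Set.disjoint_image_iff Sum.inl_injective).mpr hST
    intro i j hij
    fin_cases i <;> fin_cases j <;>
      first
      | exact absurd rfl hij
      | exact hinl _
      | exact (hinl _).symm
      | exact himg _ _ d12 | exact himg _ _ d13 | exact himg _ _ d14
      | exact himg _ _ d23 | exact himg _ _ d24 | exact himg _ _ d34
      | exact (himg _ _ d12).symm | exact (himg _ _ d13).symm | exact (himg _ _ d14).symm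
      | exact (himg _ _ d23).symm | exact (himg _ _ d24).symm | exact (himg _ _ d34).symm
  · intro i
    fin_cases i
    · exact indep_inr G
    · exact indep_lift G i1 (by norm_num)
    · exact indep_lift G i2 (by norm_num)
    · exact indep_lift G i3 (by norm_num)
    · exact indep_lift G i4 (by norm_num)


/-- If a finite simple graph admits a packing `(1,1,2,2)`-coloring, then its
1-subdivision admits a packing `(1,2,3,4,5)`-coloring. -/
theorem subdivision_packing_12345_of_packing_1122
    {V : Type*} [Fintype V] (G : SimpleGraph V)
    (h : HasPacking1122 G) :
    HasPacking12345 (oneSubdivision G) := by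
  exact aux_subdivision_packing G h
end

section
/- Let G be a finite connected cubic graph and let (I1,I2) be a pair of disjoint independent sets satisfying Condition (I). Then every connected component of the subgraph of G induced on the red vertices has at most two vertices, i.e., it is a single vertex or a single edge. -/
open SimpleGraph

variable {V : Type*}

/-- A finset `I` is an independent set of `G`. -/
def FinsetIndep (G : SimpleGraph V) (I : Finset V) : Prop :=
  ∀ u ∈ I, ∀ v ∈ I, ¬ G.Adj u v

/-- Condition (I): `|I1| + |I2|` is maximum among all pairs of disjoint
independent sets of `G`. -/
def CondI (G : SimpleGraph V) (I1 I2 : Finset V) : Prop :=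
  ∀ J1 J2 : Finset V, Disjoint J1 J2 → FinsetIndep G J1 → FinsetIndep G J2 →
    J1.card + J2.card ≤ I1.card + I2.card

/-- The set of red vertices: the vertices outside `I1 ∪ I2`. -/
def redSet (I1 I2 : Finset V) : Set V := {v | v ∉ I1 ∧ v ∉ I2}

/-- The number of connected components of the subgraph of `G` induced on the
red vertices. -/
noncomputable def numRedComp (G : SimpleGraph V) (I1 I2 : Finset V) : ℕ :=
  Nat.card ((G.induce (redSet I1 I2)).ConnectedComponent)

/-- Condition (II): subject to Condition (I), the number of connected
components of the subgraph induced on the red vertices is minimum. -/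
def CondII (G : SimpleGraph V) (I1 I2 : Finset V) : Prop :=
  ∀ J1 J2 : Finset V, Disjoint J1 J2 → FinsetIndep G J1 → FinsetIndep G J2 →
    CondI G J1 J2 → numRedComp G I1 I2 ≤ numRedComp G J1 J2

/-- The auxiliary graph `H` on the red vertices: two distinct red vertices are
adjacent iff their distance in `G` is at most 2. -/
def Hgraph (G : SimpleGraph V) (I1 I2 : Finset V) : SimpleGraph (redSet I1 I2) where
  Adj x y := x ≠ y ∧ G.edist (x : V) (y : V) ≤ 2
  symm := by
    constructor
    rintro x y ⟨hne, hd⟩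
    exact ⟨hne.symm, by rwa [SimpleGraph.edist_comm]⟩
  loopless := by constructor; rintro x ⟨hne, -⟩; exact hne rfl


/-- In a graph where every vertex has at most one neighbor, reachability
implies equality or adjacency. -/
lemma reach_of_maxdeg_one {W : Type*} (H : SimpleGraph W)
    (huniq : ∀ a b c : W, H.Adj a b → H.Adj a c → b = c)
    {x y : W} (h : H.Reachable x y) : y = x ∨ H.Adj x y := by
  obtain ⟨p⟩ := h
  induction p with
  | nil => exact Or.inl rfl
  | cons h p ih =>
    rcases ih with rfl | hadj
    · exact Or.inr h
    · exact Or.inl (huniq _ _ _ h.symm hadj).symm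

theorem red_components_small'
    {V : Type*} [Fintype V] [DecidableEq V] (G : SimpleGraph V) [DecidableRel G.Adj]
    (hconn : G.Connected) (hcubic : ∀ v : V, G.degree v = 3)
    (I1 I2 : Finset V) (hdisj : Disjoint I1 I2)
    (hI1 : FinsetIndep G I1) (hI2 : FinsetIndep G I2) (hmax : CondI G I1 I2) :
    ∀ c : (G.induce (redSet I1 I2)).ConnectedComponent, c.supp.ncard ≤ 2 := by
  -- every red vertex has a neighbor in I1
  have hnb1 : ∀ v : V, v ∉ I1 → v ∉ I2 → ∃ a ∈ I1, G.Adj v a := by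
    intro v hv1 hv2
    by_contra hno
    push_neg at hno
    have hind : FinsetIndep G (insert v I1) := by
      intro u hu w hw
      rcases Finset.mem_insert.mp hu with hu' | hu' <;>
        rcases Finset.mem_insert.mp hw with hw' | hw'
      · subst hu'; subst hw'; exact G.loopless.irrefl _
      · subst hu'; exact hno w hw'
      · subst hw'; exact fun h => hno u hu' h.symm
      · exact hI1 u hu' w hw' 
    have hd : Disjoint (insert v I1) I2 :=
      Finset.disjoint_insert_left.mpr ⟨hv2, hdisj⟩
    have := hmax (insert v I1) I2 hd hind hI2
    rw [Finset.card_insert_of_notMem hv1] at this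
    omega
  have hnb2 : ∀ v : V, v ∉ I1 → v ∉ I2 → ∃ a ∈ I2, G.Adj v a := by
    intro v hv1 hv2
    by_contra hno
    push_neg at hno
    have hind : FinsetIndep G (insert v I2) := by
      intro u hu w hw
      rcases Finset.mem_insert.mp hu with hu' | hu' <;>
        rcases Finset.mem_insert.mp hw with hw' | hw'
      · subst hu'; subst hw'; exact G.loopless.irrefl _
      · subst hu'; exact hno w hw'
      · subst hw'; exact fun h => hno u hu' h.symm
      · exact hI2 u hu' w hw' 
    have hd : Disjoint I1 (insert v I2) :=
      Finset.disjoint_insert_right.mpr ⟨hv1, hdisj⟩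
    have := hmax I1 (insert v I2) hd hI1 hind
    rw [Finset.card_insert_of_notMem hv2] at this
    omega
  -- uniqueness of red neighbors
  have huniq : ∀ a b c : (redSet I1 I2),
      (G.induce (redSet I1 I2)).Adj a b → (G.induce (redSet I1 I2)).Adj a c → b = c := by
    rintro ⟨v, hv1, hv2⟩ ⟨bv, hb1, hb2⟩ ⟨cv, hc1, hc2⟩ hab hac
    have hadb : G.Adj v bv := hab
    have hadc : G.Adj v cv := hac
    by_contra hne
    have hbc : bv ≠ cv := fun h => hne (Subtype.ext h)
    obtain ⟨p, hp, hvp⟩ := hnb1 v hv1 hv2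
    obtain ⟨q, hq, hvq⟩ := hnb2 v hv1 hv2
    have hpq : p ≠ q := fun h => Finset.disjoint_left.mp hdisj hp (h ▸ hq)
    have hpb : p ≠ bv := fun h => hb1 (h ▸ hp)
    have hpc : p ≠ cv := fun h => hc1 (h ▸ hp)
    have hqb : q ≠ bv := fun h => hb2 (h ▸ hq)
    have hqc : q ≠ cv := fun h => hc2 (h ▸ hq)
    have hsub : ({p, q, bv, cv} : Finset V) ⊆ G.neighborFinset v := by
      intro w hw
      rw [SimpleGraph.mem_neighborFinset]
      rcases Finset.mem_insert.mp hw with rfl | hw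
      · exact hvp
      rcases Finset.mem_insert.mp hw with rfl | hw
      · exact hvq
      rcases Finset.mem_insert.mp hw with rfl | hw
      · exact hadb
      · rw [Finset.mem_singleton] at hw; subst hw; exact hadc
    have h4 : ({p, q, bv, cv} : Finset V).card = 4 := by
      rw [Finset.card_insert_of_notMem (by simp [hpq, hpb, hpc]),
        Finset.card_insert_of_notMem (by simp [hqb, hqc]),
        Finset.card_insert_of_notMem (by simp [hbc]),
        Finset.card_singleton]
    have hle := Finset.card_le_card hsub
    rw [h4, SimpleGraph.card_neighborFinset_eq_degree, hcubic v] at hle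
    omega
  intro c
  obtain ⟨x, hx⟩ := c.exists_rep
  by_cases hex : ∃ u, (G.induce (redSet I1 I2)).Adj x u
  · obtain ⟨u, hu⟩ := hex
    have hsub : c.supp ⊆ {x, u} := by
      intro y hy
      rw [SimpleGraph.ConnectedComponent.mem_supp_iff] at hy
      have hreach : (G.induce (redSet I1 I2)).Reachable x y :=
        (SimpleGraph.ConnectedComponent.exact (hy.trans hx.symm)).symm
      rcases reach_of_maxdeg_one _ huniq hreach with rfl | hadj
      · exact Set.mem_insert _ _
      · right
        exact huniq x y u hadj hu
    calc c.supp.ncard ≤ ({x, u} : Set (redSet I1 I2)).ncard :=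
          Set.ncard_le_ncard hsub (Set.toFinite _)
      _ ≤ ({u} : Set (redSet I1 I2)).ncard + 1 := Set.ncard_insert_le _ _
      _ ≤ 2 := by rw [Set.ncard_singleton]
  · push_neg at hex
    have hsub : c.supp ⊆ {x} := by
      intro y hy
      rw [SimpleGraph.ConnectedComponent.mem_supp_iff] at hy
      have hreach : (G.induce (redSet I1 I2)).Reachable x y :=
        (SimpleGraph.ConnectedComponent.exact (hy.trans hx.symm)).symm
      rcases reach_of_maxdeg_one _ huniq hreach with rfl | hadj
      · exact rfl
      · exact absurd hadj (hex y)
    calc c.supp.ncard ≤ ({x} : Set (redSet I1 I2)).ncard :=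
          Set.ncard_le_ncard hsub (Set.toFinite _)
      _ ≤ 2 := by rw [Set.ncard_singleton]; omega

/-- Under Condition (I), every connected component of the subgraph of `G`
induced on the red vertices has at most two vertices. -/
theorem red_components_small
    {V : Type*} [Fintype V] [DecidableEq V] (G : SimpleGraph V) [DecidableRel G.Adj]
    (hconn : G.Connected) (hcubic : ∀ v : V, G.degree v = 3)
    (I1 I2 : Finset V) (hdisj : Disjoint I1 I2)
    (hI1 : FinsetIndep G I1) (hI2 : FinsetIndep G I2) (hmax : CondI G I1 I2) :
    ∀ c : (G.induce (redSet I1 I2)).ConnectedComponent, c.supp.ncard ≤ 2 :=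
  red_components_small' G hconn hcubic I1 I2 hdisj hI1 hI2 hmax
end

section
/- Let G be a finite connected cubic graph and let (I1,I2) be a pair of disjoint independent sets satisfying Conditions (I) and (II). Then every connected component of H contains at most one pair of red vertices that are adjacent in G (at most one red P2). -/
open SimpleGraph

variable {V : Type*}

section Aux

set_option linter.unusedSectionVars false

variable [Fintype V] [DecidableEq V] (G : SimpleGraph V) [DecidableRel G.Adj]

lemma CondI.symm' {J1 J2 : Finset V} (h : CondI G J1 J2) : CondI G J2 J1 := by
  intro K1 K2 hd h1 h2
  have := h K1 K2 hd h1 h2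
  omega

lemma four_neighbors_false (hcubic : ∀ v : V, G.degree v = 3)
    {r a b c d : V} (ha : G.Adj r a) (hb : G.Adj r b) (hc : G.Adj r c) (hd : G.Adj r d)
    (hab : a ≠ b) (hac : a ≠ c) (had : a ≠ d) (hbc : b ≠ c) (hbd : b ≠ d) (hcd : c ≠ d) :
    False := by
  have hsub : ({a, b, c, d} : Finset V) ⊆ G.neighborFinset r := by
    intro x hx
    simp only [Finset.mem_insert, Finset.mem_singleton] at hx
    rcases hx with rfl | rfl | rfl | rfl <;> simpa [SimpleGraph.mem_neighborFinset]
  have hcard : ({a, b, c, d} : Finset V).card = 4 := by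
    rw [Finset.card_insert_of_notMem (by simp [hab, hac, had]),
        Finset.card_insert_of_notMem (by simp [hbc, hbd]),
        Finset.card_insert_of_notMem (by simp [hcd]), Finset.card_singleton]
  have hle := Finset.card_le_card hsub
  rw [hcard, SimpleGraph.card_neighborFinset_eq_degree, hcubic r] at hle
  omega

lemma red_has_nbr_left {J1 J2 : Finset V} (hdisj : Disjoint J1 J2)
    (h1 : FinsetIndep G J1) (h2 : FinsetIndep G J2) (hmax : CondI G J1 J2)
    {r : V} (hr1 : r ∉ J1) (hr2 : r ∉ J2) : ∃ a ∈ J1, G.Adj r a := by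
  by_contra hno
  push_neg at hno
  have hdisj' : Disjoint (insert r J1) J2 :=
    Finset.disjoint_insert_left.mpr ⟨hr2, hdisj⟩
  have hindep : FinsetIndep G (insert r J1) := by
    intro x hx y hy hadj
    rcases Finset.mem_insert.mp hx with hxr | hx <;>
      rcases Finset.mem_insert.mp hy with hyr | hy
    · rw [hxr, hyr] at hadj; exact G.irrefl hadj
    · rw [hxr] at hadj; exact hno y hy hadj
    · rw [hyr] at hadj; exact hno x hx hadj.symm
    · exact h1 x hx y hy hadj
  have := hmax (insert r J1) J2 hdisj' hindep h2
  rw [Finset.card_insert_of_notMem hr1] at this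
  omega

lemma red_has_nbr_right {J1 J2 : Finset V} (hdisj : Disjoint J1 J2)
    (h1 : FinsetIndep G J1) (h2 : FinsetIndep G J2) (hmax : CondI G J1 J2)
    {r : V} (hr1 : r ∉ J1) (hr2 : r ∉ J2) : ∃ a ∈ J2, G.Adj r a :=
  red_has_nbr_left G hdisj.symm h2 h1 (hmax.symm' G) hr2 hr1

lemma red_two_red_nbrs_false (hcubic : ∀ v : V, G.degree v = 3)
    {J1 J2 : Finset V} (hdisj : Disjoint J1 J2)
    (h1 : FinsetIndep G J1) (h2 : FinsetIndep G J2) (hmax : CondI G J1 J2)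
    {r s t : V} (hr1 : r ∉ J1) (hr2 : r ∉ J2) (hs1 : s ∉ J1) (hs2 : s ∉ J2)
    (ht1 : t ∉ J1) (ht2 : t ∉ J2) (hst : s ≠ t)
    (hrs : G.Adj r s) (hrt : G.Adj r t) : False := by
  obtain ⟨a, haJ, hra⟩ := red_has_nbr_left G hdisj h1 h2 hmax hr1 hr2
  obtain ⟨b, hbJ, hrb⟩ := red_has_nbr_right G hdisj h1 h2 hmax hr1 hr2
  exact four_neighbors_false G hcubic hrs hrt hra hrb hst
    (fun h => hs1 (h ▸ haJ)) (fun h => hs2 (h ▸ hbJ))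
    (fun h => ht1 (h ▸ haJ)) (fun h => ht2 (h ▸ hbJ))
    (fun h => (Finset.disjoint_left.mp hdisj haJ) (h ▸ hbJ))

lemma adj_or_common {a b : V} (hne : a ≠ b) (h : G.edist a b ≤ 2) :
    G.Adj a b ∨ ∃ w, G.Adj a w ∧ G.Adj w b := by
  have htop : G.edist a b ≠ ⊤ := by
    intro h'
    rw [h'] at h
    simp at h
  obtain ⟨p, hp⟩ := SimpleGraph.exists_walk_of_edist_ne_top htop
  rw [← hp] at h
  have hlen : p.length ≤ 2 := by exact_mod_cast h
  have hpos : p.length ≠ 0 := fun h0 => hne (SimpleGraph.Walk.eq_of_length_eq_zero h0)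
  have h12 : p.length = 1 ∨ p.length = 2 := by omega
  rcases h12 with h1 | h2
  · left
    have h01 := p.adj_getVert_succ (i := 0) (by omega)
    rwa [p.getVert_zero, show (0 + 1) = p.length from by omega, p.getVert_length] at h01
  · right
    refine ⟨p.getVert 1, ?_, ?_⟩
    · have h01 := p.adj_getVert_succ (i := 0) (by omega)
      rwa [p.getVert_zero] at h01
    · have h12' := p.adj_getVert_succ (i := 1) (by omega)
      rwa [show (1 + 1) = p.length from by omega, p.getVert_length] at h12'

lemma swap_step (hcubic : ∀ v : V, G.degree v = 3)
    {J1 J2 : Finset V} (hdisj : Disjoint J1 J2)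
    (h1 : FinsetIndep G J1) (h2 : FinsetIndep G J2) (hmax : CondI G J1 J2)
    {u v w : V} (hu1 : u ∉ J1) (hu2 : u ∉ J2) (hv1 : v ∉ J1) (hv2 : v ∉ J2)
    (hAdj : G.Adj u v) (hw : w ∈ J1) (hwu : G.Adj u w) :
    Disjoint (insert u (J1.erase w)) J2 ∧ FinsetIndep G (insert u (J1.erase w)) ∧
      CondI G (insert u (J1.erase w)) J2 := by
  obtain ⟨b, hbJ, hub⟩ := red_has_nbr_right G hdisj h1 h2 hmax hu1 hu2
  have hkey : ∀ a ∈ J1, a ≠ w → ¬ G.Adj u a := by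
    intro a haJ haw hadj
    exact four_neighbors_false G hcubic hAdj hwu hadj hub
      (fun h => by subst h; exact hv1 hw)
      (fun h => by subst h; exact hv1 haJ)
      (fun h => by subst h; exact hv2 hbJ)
      (fun h => haw (h.symm))
      (fun h => by subst h; exact (Finset.disjoint_left.mp hdisj hw) hbJ)
      (fun h => by subst h; exact (Finset.disjoint_left.mp hdisj haJ) hbJ)
  have hcard : (insert u (J1.erase w)).card = J1.card := by
    rw [Finset.card_insert_of_notMem (fun hm => hu1 (Finset.mem_of_mem_erase hm)),
        Finset.card_erase_of_mem hw]
    have : 0 < J1.card := Finset.card_pos.mpr ⟨w, hw⟩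
    omega
  refine ⟨Finset.disjoint_insert_left.mpr
      ⟨hu2, Finset.disjoint_of_subset_left (Finset.erase_subset w J1) hdisj⟩, ?_, ?_⟩
  · intro x hx y hy hadj
    rcases Finset.mem_insert.mp hx with hxr | hx <;>
      rcases Finset.mem_insert.mp hy with hyr | hy
    · rw [hxr, hyr] at hadj; exact G.irrefl hadj
    · obtain ⟨hyw, hyJ⟩ := Finset.mem_erase.mp hy
      rw [hxr] at hadj
      exact hkey y hyJ hyw hadj
    · obtain ⟨hxw, hxJ⟩ := Finset.mem_erase.mp hx
      rw [hyr] at hadj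
      exact hkey x hxJ hxw hadj.symm
    · exact h1 x (Finset.mem_of_mem_erase hx) y (Finset.mem_of_mem_erase hy) hadj
  · intro K1 K2 hd i1 i2
    have := hmax K1 K2 hd i1 i2
    omega

lemma key (hcubic : ∀ v : V, G.degree v = 3) :
    ∀ k : ℕ, ∀ J1 J2 : Finset V, Disjoint J1 J2 → FinsetIndep G J1 → FinsetIndep G J2 →
      CondI G J1 J2 → ∀ u v u' v' : V,
      u ∉ J1 → u ∉ J2 → v ∉ J1 → v ∉ J2 → u' ∉ J1 → u' ∉ J2 → v' ∉ J1 → v' ∉ J2 →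
      G.Adj u v → G.Adj u' v' →
      ¬ ((u = u' ∧ v = v') ∨ (u = v' ∧ v = u')) →
      ∀ x : ℕ → V, x 0 = u → (x k = u' ∨ x k = v') →
      (∀ i, 1 ≤ i → i ≤ k → x i ∉ J1 ∧ x i ∉ J2) →
      (∀ i, i < k → x i ≠ x (i+1) ∧ G.edist (x i) (x (i+1)) ≤ 2) →
      False := by
  intro k
  induction k using Nat.strong_induction_on with
  | _ k IH =>
  intro J1 J2 hdisj h1 h2 hmax u v u' v' hu1 hu2 hv1 hv2 hu'1 hu'2 hv'1 hv'2
    hAdj hAdj' hne x hx0 hxk hxred hxadj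
  by_cases huu' : u = u'
  · exact red_two_red_nbrs_false G hcubic hdisj h1 h2 hmax hu1 hu2 hv1 hv2 hv'1 hv'2
      (fun h => hne (Or.inl ⟨huu', h⟩)) hAdj (by rw [huu']; exact hAdj')
  by_cases huv' : u = v'
  · exact red_two_red_nbrs_false G hcubic hdisj h1 h2 hmax hu1 hu2 hv1 hv2 hu'1 hu'2
      (fun h => hne (Or.inr ⟨huv', h⟩)) hAdj (by rw [huv']; exact hAdj'.symm)
  by_cases hvu' : v = u'
  · exact red_two_red_nbrs_false G hcubic hdisj h1 h2 hmax hv1 hv2 hu1 hu2 hv'1 hv'2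
      (fun h => hne (Or.inr ⟨h, hvu'⟩)) hAdj.symm (by rw [hvu']; exact hAdj')
  by_cases hvv' : v = v'
  · exact red_two_red_nbrs_false G hcubic hdisj h1 h2 hmax hv1 hv2 hu1 hu2 hu'1 hu'2
      (fun h => hne (Or.inl ⟨h, hvv'⟩)) hAdj.symm (by rw [hvv']; exact hAdj'.symm)
  rcases Nat.eq_zero_or_pos k with rfl | hk
  · rw [hx0] at hxk
    rcases hxk with h | h
    · exact huu' h
    · exact huv' h
  by_cases hmid : ∃ i, 1 ≤ i ∧ i ≤ k ∧ (x i = u ∨ x i = v)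
  · obtain ⟨i, hi1, hik, hcase⟩ := hmid
    have hiklt : k - i < k := by omega
    rcases hcase with hxi | hxi
    · exact IH (k - i) hiklt J1 J2 hdisj h1 h2 hmax u v u' v' hu1 hu2 hv1 hv2 hu'1 hu'2 hv'1 hv'2
        hAdj hAdj' hne (fun j => x (i + j)) (by show x (i + 0) = _; rw [Nat.add_zero]; exact hxi)
        (by show x (i + (k - i)) = u' ∨ x (i + (k - i)) = v'; rw [show i + (k - i) = k from by omega]; exact hxk)
        (fun j hj1 hj2 => hxred (i + j) (by omega) (by omega))
        (fun j hj => by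
          have h := hxadj (i + j) (by omega)
          rwa [show i + j + 1 = i + (j + 1) from by omega] at h)
    · exact IH (k - i) hiklt J1 J2 hdisj h1 h2 hmax v u u' v' hv1 hv2 hu1 hu2 hu'1 hu'2 hv'1 hv'2
        hAdj.symm hAdj'
        (by rintro (⟨ha, hb⟩ | ⟨ha, hb⟩)
            · exact hne (Or.inr ⟨hb, ha⟩)
            · exact hne (Or.inl ⟨hb, ha⟩))
        (fun j => x (i + j)) (by show x (i + 0) = _; rw [Nat.add_zero]; exact hxi)
        (by show x (i + (k - i)) = u' ∨ x (i + (k - i)) = v'; rw [show i + (k - i) = k from by omega]; exact hxk)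
        (fun j hj1 hj2 => hxred (i + j) (by omega) (by omega))
        (fun j hj => by
          have h := hxadj (i + j) (by omega)
          rwa [show i + j + 1 = i + (j + 1) from by omega] at h)
  by_cases hmid2 : ∃ i, 1 ≤ i ∧ i < k ∧ (x i = u' ∨ x i = v')
  · obtain ⟨i, hi1, hik, hcase⟩ := hmid2
    exact IH i hik J1 J2 hdisj h1 h2 hmax u v u' v' hu1 hu2 hv1 hv2 hu'1 hu'2 hv'1 hv'2
      hAdj hAdj' hne x hx0 hcase (fun j hj1 hj2 => hxred j hj1 (by omega))
      (fun j hj => hxadj j (by omega))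
  push_neg at hmid
  obtain ⟨hy1, hy2⟩ := hxred 1 le_rfl hk
  have hyne := hmid 1 le_rfl hk
  have hyu : x 1 ≠ u := hyne.1
  have hyv : x 1 ≠ v := hyne.2
  obtain ⟨hne01, hdist01⟩ := hxadj 0 hk
  rw [hx0] at hne01 hdist01
  rcases adj_or_common G hne01 hdist01 with hadjuy | ⟨w, hwu, hwy⟩
  · exact red_two_red_nbrs_false G hcubic hdisj h1 h2 hmax hu1 hu2 hv1 hv2 hy1 hy2
      (fun h => hyv h.symm) hAdj hadjuy
  by_cases hw1 : w ∈ J1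
  · obtain ⟨hdisj', hindep', hmax'⟩ :=
      swap_step G hcubic hdisj h1 h2 hmax hu1 hu2 hv1 hv2 hAdj hw1 hwu
    set K1 := insert u (J1.erase w) with hK1
    have hnotK1 : ∀ z : V, z ≠ u → z ∉ J1 → z ∉ K1 := by
      intro z hzu hz hmem
      rcases Finset.mem_insert.mp hmem with h | h
      · exact hzu h
      · exact hz (Finset.mem_of_mem_erase h)
    have hwK1 : w ∉ K1 := by
      intro hmem
      rcases Finset.mem_insert.mp hmem with h | h
      · exact hwu.ne' h
      · exact (Finset.notMem_erase w J1) h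
    have hwJ2 : w ∉ J2 := Finset.disjoint_left.mp hdisj hw1
    rcases eq_or_lt_of_le (show 1 ≤ k from hk) with hk1 | hk2
    · rw [← hk1] at hxk
      rcases hxk with h | h
      · exact red_two_red_nbrs_false G hcubic hdisj' hindep' h2 hmax'
          (hnotK1 u' (Ne.symm huu') hu'1) hu'2 (hnotK1 v' (Ne.symm huv') hv'1) hv'2 hwK1 hwJ2
          (fun hh => by subst hh; exact hv'1 hw1) hAdj' (by rw [← h]; exact hwy.symm)
      · exact red_two_red_nbrs_false G hcubic hdisj' hindep' h2 hmax'
          (hnotK1 v' (Ne.symm huv') hv'1) hv'2 (hnotK1 u' (Ne.symm huu') hu'1) hu'2 hwK1 hwJ2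
          (fun hh => by subst hh; exact hu'1 hw1) hAdj'.symm (by rw [← h]; exact hwy.symm)
    · exact IH (k - 1) (by omega) K1 J2 hdisj' hindep' h2 hmax' (x 1) w u' v'
        (hnotK1 (x 1) hyu hy1) hy2 hwK1 hwJ2
        (hnotK1 u' (Ne.symm huu') hu'1) hu'2 (hnotK1 v' (Ne.symm huv') hv'1) hv'2
        hwy.symm hAdj'
        (by rintro (⟨ha, hb⟩ | ⟨ha, hb⟩)
            · exact hv'1 (hb ▸ hw1)
            · exact hu'1 (hb ▸ hw1))
        (fun j => x (j + 1)) rfl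
        (by show x (k - 1 + 1) = u' ∨ x (k - 1 + 1) = v'; rw [show k - 1 + 1 = k from by omega]; exact hxk)
        (fun j hj1 hj2 =>
          ⟨hnotK1 (x (j + 1)) ((hmid (j + 1) (by omega) (by omega)).1)
            (hxred (j + 1) (by omega) (by omega)).1,
           (hxred (j + 1) (by omega) (by omega)).2⟩)
        (fun j hj => hxadj (j + 1) (by omega))
  by_cases hw2 : w ∈ J2
  · obtain ⟨hdisj', hindep', hmax'⟩ :=
      swap_step G hcubic hdisj.symm h2 h1 (hmax.symm' G) hu2 hu1 hv2 hv1 hAdj hw2 hwu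
    set K2 := insert u (J2.erase w) with hK2
    have hdisj'' : Disjoint J1 K2 := hdisj'.symm
    have hmax'' : CondI G J1 K2 := (hmax'.symm' G)
    have hnotK2 : ∀ z : V, z ≠ u → z ∉ J2 → z ∉ K2 := by
      intro z hzu hz hmem
      rcases Finset.mem_insert.mp hmem with h | h
      · exact hzu h
      · exact hz (Finset.mem_of_mem_erase h)
    have hwK2 : w ∉ K2 := by
      intro hmem
      rcases Finset.mem_insert.mp hmem with h | h
      · exact hwu.ne' h
      · exact (Finset.notMem_erase w J2) h
    have hwJ1 : w ∉ J1 := Finset.disjoint_right.mp hdisj hw2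
    rcases eq_or_lt_of_le (show 1 ≤ k from hk) with hk1 | hk2
    · rw [← hk1] at hxk
      rcases hxk with h | h
      · exact red_two_red_nbrs_false G hcubic hdisj'' h1 hindep' hmax''
          hu'1 (hnotK2 u' (Ne.symm huu') hu'2) hv'1 (hnotK2 v' (Ne.symm huv') hv'2) hwJ1 hwK2
          (fun hh => by subst hh; exact hv'2 hw2) hAdj' (by rw [← h]; exact hwy.symm)
      · exact red_two_red_nbrs_false G hcubic hdisj'' h1 hindep' hmax''
          hv'1 (hnotK2 v' (Ne.symm huv') hv'2) hu'1 (hnotK2 u' (Ne.symm huu') hu'2) hwJ1 hwK2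
          (fun hh => by subst hh; exact hu'2 hw2) hAdj'.symm (by rw [← h]; exact hwy.symm)
    · exact IH (k - 1) (by omega) J1 K2 hdisj'' h1 hindep' hmax'' (x 1) w u' v'
        hy1 (hnotK2 (x 1) hyu hy2) hwJ1 hwK2
        hu'1 (hnotK2 u' (Ne.symm huu') hu'2) hv'1 (hnotK2 v' (Ne.symm huv') hv'2)
        hwy.symm hAdj'
        (by rintro (⟨ha, hb⟩ | ⟨ha, hb⟩)
            · exact hv'2 (hb ▸ hw2)
            · exact hu'2 (hb ▸ hw2))
        (fun j => x (j + 1)) rfl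
        (by show x (k - 1 + 1) = u' ∨ x (k - 1 + 1) = v'; rw [show k - 1 + 1 = k from by omega]; exact hxk)
        (fun j hj1 hj2 =>
          ⟨(hxred (j + 1) (by omega) (by omega)).1,
           hnotK2 (x (j + 1)) ((hmid (j + 1) (by omega) (by omega)).1)
            (hxred (j + 1) (by omega) (by omega)).2⟩)
        (fun j hj => hxadj (j + 1) (by omega))
  -- w is red
  by_cases hwv : w = v
  · exact red_two_red_nbrs_false G hcubic hdisj h1 h2 hmax hv1 hv2 hu1 hu2 hy1 hy2
      (fun h => hyu h.symm) hAdj.symm (by rw [← hwv]; exact hwy)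
  · exact red_two_red_nbrs_false G hcubic hdisj h1 h2 hmax hu1 hu2 hv1 hv2 hw1 hw2
      (fun h => hwv h.symm) hAdj hwu

end Aux

/-- Under Conditions (I) and (II), every connected component of `H` contains at
most one pair of red vertices adjacent in `G` (at most one red `P2`). -/
theorem at_most_one_red_P2_per_component
    {V : Type*} [Fintype V] [DecidableEq V] (G : SimpleGraph V) [DecidableRel G.Adj]
    (hconn : G.Connected) (hcubic : ∀ v : V, G.degree v = 3)
    (I1 I2 : Finset V) (hdisj : Disjoint I1 I2)
    (hI1 : FinsetIndep G I1) (hI2 : FinsetIndep G I2)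
    (hmax : CondI G I1 I2) (hmin : CondII G I1 I2) :
    ∀ c : (Hgraph G I1 I2).ConnectedComponent,
      ∀ u ∈ c.supp, ∀ v ∈ c.supp, ∀ u' ∈ c.supp, ∀ v' ∈ c.supp,
        G.Adj (u : V) (v : V) → G.Adj (u' : V) (v' : V) →
          (u = u' ∧ v = v') ∨ (u = v' ∧ v = u') := by
  intro c u hu v hv u' hu' v' hv' hadj hadj'
  by_contra hne
  rw [SimpleGraph.ConnectedComponent.mem_supp_iff] at hu hu'
  have hreach : (Hgraph G I1 I2).Reachable u u' :=
    SimpleGraph.ConnectedComponent.exact (hu.trans hu'.symm)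
  obtain ⟨p⟩ := hreach
  have hured : (u : V) ∉ I1 ∧ (u : V) ∉ I2 := u.2
  have hvred : (v : V) ∉ I1 ∧ (v : V) ∉ I2 := v.2
  have hu'red : (u' : V) ∉ I1 ∧ (u' : V) ∉ I2 := u'.2
  have hv'red : (v' : V) ∉ I1 ∧ (v' : V) ∉ I2 := v'.2
  refine key G hcubic p.length I1 I2 hdisj hI1 hI2 hmax (u : V) (v : V) (u' : V) (v' : V)
    hured.1 hured.2 hvred.1 hvred.2 hu'red.1 hu'red.2 hv'red.1 hv'red.2 hadj hadj'
    ?_ (fun i => ((p.getVert i : redSet I1 I2) : V))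
    (by show ((p.getVert 0 : redSet I1 I2) : V) = (u : V); rw [p.getVert_zero])
    (Or.inl (by show ((p.getVert p.length : redSet I1 I2) : V) = (u' : V); rw [p.getVert_length]))
    (fun i _ _ => ⟨(p.getVert i).2.1, (p.getVert i).2.2⟩)
    ?_
  · rintro (⟨h1, h2⟩ | ⟨h1, h2⟩)
    · exact hne (Or.inl ⟨Subtype.ext h1, Subtype.ext h2⟩)
    · exact hne (Or.inr ⟨Subtype.ext h1, Subtype.ext h2⟩)
  · intro i hi
    obtain ⟨hne', hd⟩ := p.adj_getVert_succ hi
    exact ⟨fun hEq => hne' (Subtype.ext hEq), hd⟩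
end

section
/- Let G be a finite connected cubic graph and let (I1,I2) be a pair of disjoint independent sets satisfying Conditions (I) and (II). Suppose the cycle setup holds for C', let u be a red vertex of C' that is an isolated vertex of the subgraph of G induced on the red vertices (a red P1), and let u' be a neighbor of u in G that does not lie on C', say u' ∈ I_i with i ∈ {1,2}. Then (I_i \ {u'}) ∪ {u} is an independent set disjoint from I_{3−i}, and this new pair of disjoint independent sets again satisfies Conditions (I) and (II). -/
open SimpleGraph

variable {V : Type*}

/-- Transfer a walk in `G.induce R` avoiding the isolated vertex `a` to
reachability in `G.induce (R \ {a})`. -/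
lemma reach_transfer {G : SimpleGraph V} {R : Set V} {a : V}
    (hiso : ∀ z ∈ R, ¬ G.Adj a z) :
    ∀ {x y : ↥R} (_ : (G.induce R).Walk x y), (x : V) ≠ a →
      (y : V) ≠ a ∧ ∀ (hx' : (x : V) ∈ R \ {a}) (hy' : (y : V) ∈ R \ {a}),
        (G.induce (R \ {a})).Reachable ⟨x, hx'⟩ ⟨y, hy'⟩ := by
  intro x y w
  induction w with
  | nil =>
    intro hx
    exact ⟨hx, fun h1 h2 => Reachable.refl _⟩
  | @cons p q r h w ih =>
    intro hx
    have hadj : G.Adj (p : V) (q : V) := h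
    have hq : (q : V) ≠ a := by
      intro hqa
      exact hiso (p : V) p.2 (by rw [← hqa] at *; exact hadj.symm)
    obtain ⟨hy, hr⟩ := ih hq
    refine ⟨hy, fun hx' hy' => ?_⟩
    have hq' : (q : V) ∈ R \ {a} := ⟨q.2, hq⟩
    exact (SimpleGraph.Adj.reachable
      (show (G.induce (R \ {a})).Adj ⟨p, hx'⟩ ⟨q, hq'⟩ from hadj)).trans (hr hq' hy')

/-- Removing an isolated vertex decreases the component count by exactly
(at least) one. -/
lemma card_succ_le [Fintype V] (G : SimpleGraph V) (R : Set V) (a : V)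
    (haR : a ∈ R) (hiso : ∀ z ∈ R, ¬ G.Adj a z) :
    Nat.card (G.induce (R \ ({a} : Set V))).ConnectedComponent + 1 ≤
      Nat.card (G.induce R).ConnectedComponent := by
  classical
  set S : Set V := R \ {a} with hS
  have hSsub : ∀ z ∈ S, z ∈ R := fun z hz => hz.1
  let φ : G.induce S →g G.induce R := ⟨fun x => ⟨x.1, x.2.1⟩, fun {p q} h => h⟩
  have f1 : ∀ x y : ↥S, (G.induce R).Reachable ⟨x.1, x.2.1⟩ ⟨y.1, y.2.1⟩ →
      (G.induce S).Reachable x y := by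
    intro x y hreach
    obtain ⟨w⟩ := hreach
    have hxne : ((⟨x.1, x.2.1⟩ : ↥R) : V) ≠ a := x.2.2
    obtain ⟨-, hr⟩ := reach_transfer hiso w hxne
    exact hr x.2 y.2
  have f2 : ∀ x : ↥S, ¬ (G.induce R).Reachable ⟨x.1, x.2.1⟩ ⟨a, haR⟩ := by
    intro x hreach
    obtain ⟨w⟩ := hreach
    exact (reach_transfer hiso w x.2.2).1 rfl
  let F : (G.induce S).ConnectedComponent ⊕ Unit → (G.induce R).ConnectedComponent :=
    Sum.elim (ConnectedComponent.map φ) (fun _ => (G.induce R).connectedComponentMk ⟨a, haR⟩)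
  have hF : Function.Injective F := by
    rintro (c | ⟨⟩) (d | ⟨⟩) h
    · have : c = d := by
        revert h
        refine ConnectedComponent.ind₂ ?_ c d
        intro x y h
        simp only [F, Sum.elim_inl, ConnectedComponent.map_mk] at h
        have hr := (SimpleGraph.ConnectedComponent.eq).mp h
        exact ConnectedComponent.sound (f1 x y hr)
      rw [this]
    · exfalso
      revert h
      refine ConnectedComponent.ind ?_ c
      intro x h
      simp only [F, Sum.elim_inl, Sum.elim_inr, ConnectedComponent.map_mk] at h
      exact f2 x ((SimpleGraph.ConnectedComponent.eq).mp h)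
    · exfalso
      revert h
      refine ConnectedComponent.ind ?_ d
      intro x h
      simp only [F, Sum.elim_inl, Sum.elim_inr, ConnectedComponent.map_mk] at h
      exact f2 x ((SimpleGraph.ConnectedComponent.eq).mp h.symm)
    · rfl
  have := Nat.card_le_card_of_injective F hF
  have hu : Nat.card Unit = 1 := Nat.card_unique
  rwa [Nat.card_sum, hu] at this

/-- Adding back one vertex `b` adjacent to `c ∈ S` does not increase the
component count. -/
lemma card_le_surj [Fintype V] (G : SimpleGraph V) (S R' : Set V)
    (hSR' : ∀ z ∈ S, z ∈ R') (b : V) (hcov : ∀ z ∈ R', z ∈ S ∨ z = b)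
    (c : V) (hc : c ∈ S) (hbc : G.Adj b c) :
    Nat.card (G.induce R').ConnectedComponent ≤
      Nat.card (G.induce S).ConnectedComponent := by
  classical
  let ψ : G.induce S →g G.induce R' := ⟨fun x => ⟨x.1, hSR' x.1 x.2⟩, fun {p q} h => h⟩
  have hsurj : Function.Surjective (ConnectedComponent.map ψ) := by
    intro c0
    refine ConnectedComponent.ind ?_ c0
    intro x
    rcases hcov x.1 x.2 with hxS | hxb
    · exact ⟨(G.induce S).connectedComponentMk ⟨x.1, hxS⟩, by
        simp only [ConnectedComponent.map_mk]
        congr 1⟩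
    · refine ⟨(G.induce S).connectedComponentMk ⟨c, hc⟩, ?_⟩
      simp only [ConnectedComponent.map_mk]
      refine ConnectedComponent.sound (SimpleGraph.Adj.reachable ?_)
      show G.Adj c x.1
      rw [hxb]
      exact hbc.symm
  exact Nat.card_le_card_of_surjective _ hsurj

/-- Adding back one arbitrary vertex `b ∈ R'` increases the component count
by at most one. -/
lemma card_le_surj' [Fintype V] (G : SimpleGraph V) (S R' : Set V)
    (hSR' : ∀ z ∈ S, z ∈ R') (b : V) (hbR' : b ∈ R')
    (hcov : ∀ z ∈ R', z ∈ S ∨ z = b) :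
    Nat.card (G.induce R').ConnectedComponent ≤
      Nat.card (G.induce S).ConnectedComponent + 1 := by
  classical
  let ψ : G.induce S →g G.induce R' := ⟨fun x => ⟨x.1, hSR' x.1 x.2⟩, fun {p q} h => h⟩
  let F : (G.induce S).ConnectedComponent ⊕ Unit → (G.induce R').ConnectedComponent :=
    Sum.elim (ConnectedComponent.map ψ) (fun _ => (G.induce R').connectedComponentMk ⟨b, hbR'⟩)
  have hsurj : Function.Surjective F := by
    intro c0
    refine ConnectedComponent.ind ?_ c0
    intro x
    rcases hcov x.1 x.2 with hxS | hxb
    · exact ⟨Sum.inl ((G.induce S).connectedComponentMk ⟨x.1, hxS⟩), by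
        simp only [F, Sum.elim_inl, ConnectedComponent.map_mk]
        congr 1⟩
    · refine ⟨Sum.inr ⟨⟩, ?_⟩
      simp only [F, Sum.elim_inr]
      congr 1
      exact Subtype.ext hxb.symm
  have := Nat.card_le_card_of_surjective F hsurj
  have hu : Nat.card Unit = 1 := Nat.card_unique
  rwa [Nat.card_sum, hu] at this

/-- Key strict decrease: swap isolated `a` out and `b` in, where `b` has a
neighbour `c ∈ R \ {a}`. -/
lemma compCount_lt_of_swap [Fintype V] (G : SimpleGraph V) (R : Set V) (a b c : V)
    (haR : a ∈ R) (hiso : ∀ z ∈ R, ¬ G.Adj a z) (hcR : c ∈ R) (hca : c ≠ a)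
    (hbc : G.Adj b c) :
    Nat.card (G.induce ((R \ {a}) ∪ {b})).ConnectedComponent <
      Nat.card (G.induce R).ConnectedComponent := by
  have h1 := card_le_surj G (R \ {a}) ((R \ {a}) ∪ {b})
    (fun z hz => Or.inl hz) b
    (fun z hz => by simpa [or_comm] using hz)
    c ⟨hcR, hca⟩ hbc
  have h2 := card_succ_le G R a haR hiso
  omega

/-- Key non-increase: swap isolated `a` out and arbitrary `b` in. -/
lemma compCount_le_of_swap [Fintype V] (G : SimpleGraph V) (R : Set V) (a b : V)
    (haR : a ∈ R) (hiso : ∀ z ∈ R, ¬ G.Adj a z) :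
    Nat.card (G.induce ((R \ {a}) ∪ {b})).ConnectedComponent ≤
      Nat.card (G.induce R).ConnectedComponent := by
  have h1 := card_le_surj' G (R \ {a}) ((R \ {a}) ∪ {b})
    (fun z hz => Or.inl hz) b (Or.inr rfl)
    (fun z hz => by simpa [or_comm] using hz)
  have h2 := card_succ_le G R a haR hiso
  omega


/-- The number of black vertices on the cycle `C'`: `k` in the no-red-`P2`
case and `k - 1` in the red-`P2` case. -/
def blackCount (k : ℕ) (p2 : Bool) : ℕ := if p2 then k - 1 else k

/-- The cycle setup: `u 0, …, u (k-1)` are red vertices forming the vertex set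
of a connected component of `H`, and `C'` is a cycle of `G` which is either
`u 0, v 0, u 1, v 1, …, u (k-1), v (k-1), u 0` (no-red-`P2` case, `p2 = false`,
`2k` distinct vertices), or
`u 0, v 0, u 1, v 1, …, v (k-2), u (k-1), u 0` (red-`P2` case, `p2 = true`,
`2k - 1` distinct vertices, with `u (k-1)` adjacent to `u 0`). -/
def CycleSetup (G : SimpleGraph V) (I1 I2 : Finset V) (k : ℕ)
    (u v : ℕ → V) (p2 : Bool) : Prop :=
  3 ≤ k ∧
  (∀ i < k, u i ∈ redSet I1 I2) ∧
  (∀ i < blackCount k p2, v i ∈ I1 ∨ v i ∈ I2) ∧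
  (∀ i < k, ∀ j < k, u i = u j → i = j) ∧
  (∀ i < blackCount k p2, ∀ j < blackCount k p2, v i = v j → i = j) ∧
  (∀ i < k, ∀ j < blackCount k p2, u i ≠ v j) ∧
  (∀ i < blackCount k p2, G.Adj (u i) (v i)) ∧
  (∀ i < blackCount k p2, G.Adj (v i) (u ((i + 1) % k))) ∧
  (p2 = true → G.Adj (u (k - 1)) (u 0)) ∧
  (∃ c : (Hgraph G I1 I2).ConnectedComponent,
      c.supp = {x : redSet I1 I2 | ∃ i < k, (x : V) = u i})

/-- The vertex set of the cycle `C'`. -/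
def cycleVerts (k : ℕ) (u v : ℕ → V) (p2 : Bool) : Set V :=
  {x | (∃ i < k, x = u i) ∨ (∃ i < blackCount k p2, x = v i)}

lemma condI_comm {V : Type*} {G : SimpleGraph V} {A B : Finset V} (h : CondI G A B) :
    CondI G B A := by
  intro J1 J2 hd h1 h2
  have := h J1 J2 hd h1 h2
  omega

lemma redSet_comm {V : Type*} (A B : Finset V) : redSet A B = redSet B A :=
  Set.ext fun _ => and_comm

lemma numRedComp_comm {V : Type*} (G : SimpleGraph V) (A B : Finset V) :
    numRedComp G A B = numRedComp G B A := by
  unfold numRedComp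
  rw [redSet_comm]

lemma condII_comm {V : Type*} {G : SimpleGraph V} {A B : Finset V} (h : CondII G A B) :
    CondII G B A := by
  intro J1 J2 hd h1 h2 hci
  rw [numRedComp_comm]
  exact h J1 J2 hd h1 h2 hci

lemma switch_aux {V : Type*} [Fintype V] [DecidableEq V] (G : SimpleGraph V)
    [DecidableRel G.Adj]
    (hcubic : ∀ w : V, G.degree w = 3)
    (A B : Finset V) (hdisj : Disjoint A B)
    (hA : FinsetIndep G A) (hB : FinsetIndep G B)
    (hmax : CondI G A B) (hmin : CondII G A B)
    (k : ℕ) (u v : ℕ → V) (p2 : Bool)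
    (hk : 3 ≤ k)
    (hured : ∀ i < k, u i ∉ A ∧ u i ∉ B)
    (hvblack : ∀ i < blackCount k p2, v i ∈ A ∨ v i ∈ B)
    (huinj : ∀ i < k, ∀ j < k, u i = u j → i = j)
    (hvinj : ∀ i < blackCount k p2, ∀ j < blackCount k p2, v i = v j → i = j)
    (hadj1 : ∀ i < blackCount k p2, G.Adj (u i) (v i))
    (hadj2 : ∀ i < blackCount k p2, G.Adj (v i) (u ((i + 1) % k)))
    (hp2 : p2 = true → G.Adj (u (k - 1)) (u 0))
    (i₀ : ℕ) (hi₀ : i₀ < k)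
    (hP1 : ∀ y : V, y ∉ A → y ∉ B → ¬ G.Adj (u i₀) y)
    (u' : V) (hadj : G.Adj (u i₀) u') (hu' : u' ∉ cycleVerts k u v p2)
    (huA : u' ∈ A) :
    FinsetIndep G (insert (u i₀) (A.erase u')) ∧
    Disjoint (insert (u i₀) (A.erase u')) B ∧
    CondI G (insert (u i₀) (A.erase u')) B ∧
    CondII G (insert (u i₀) (A.erase u')) B := by
  have hbck : blackCount k p2 ≤ k := by
    unfold blackCount; cases p2 <;> simp <;> omega
  obtain ⟨hi₀bc, prev, hprev_lt, hprev_ne, hprev_adj⟩ :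
      i₀ < blackCount k p2 ∧
        ∃ prev, prev < blackCount k p2 ∧ prev ≠ i₀ ∧ G.Adj (v prev) (u i₀) := by
    cases hp : p2 with
    | true =>
      subst hp
      have hbc : blackCount k true = k - 1 := rfl
      have h1 : i₀ ≠ k - 1 := by
        intro h
        exact hP1 (u 0) (hured 0 (by omega)).1 (hured 0 (by omega)).2 (h ▸ hp2 rfl)
      have h2 : i₀ ≠ 0 := by
        intro h
        exact hP1 (u (k - 1)) (hured (k - 1) (by omega)).1 (hured (k - 1) (by omega)).2
          (h ▸ (hp2 rfl).symm)
      refine ⟨by rw [hbc]; omega, i₀ - 1, by rw [hbc]; omega, by omega, ?_⟩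
      have := hadj2 (i₀ - 1) (by rw [hbc]; omega)
      rwa [Nat.sub_add_cancel (by omega), Nat.mod_eq_of_lt hi₀] at this
    | false =>
      subst hp
      have hbc : blackCount k false = k := rfl
      have hmod : ((i₀ + (k - 1)) % k + 1) % k = i₀ := by
        rw [Nat.mod_add_mod, show i₀ + (k - 1) + 1 = i₀ + k by omega,
          Nat.add_mod_right, Nat.mod_eq_of_lt hi₀]
      refine ⟨by rw [hbc]; omega, (i₀ + (k - 1)) % k,
        by rw [hbc]; exact Nat.mod_lt _ (by omega), ?_, ?_⟩
      · intro h
        rw [h] at hmod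
        rcases Nat.lt_or_ge (i₀ + 1) k with h' | h'
        · rw [Nat.mod_eq_of_lt h'] at hmod; omega
        · have hk1 : i₀ + 1 = k := by omega
          rw [hk1, Nat.mod_self] at hmod; omega
      · have := hadj2 ((i₀ + (k - 1)) % k) (by rw [hbc]; exact Nat.mod_lt _ (by omega))
        rwa [hmod] at this
  have hprev_k : prev < k := lt_of_lt_of_le hprev_lt hbck
  have hnxt_lt : (i₀ + 1) % k < k := Nat.mod_lt _ (by omega)
  have hnxt_ne : (i₀ + 1) % k ≠ i₀ := by
    intro h
    rcases Nat.lt_or_ge (i₀ + 1) k with h' | h'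
    · rw [Nat.mod_eq_of_lt h'] at h; omega
    · have hk1 : i₀ + 1 = k := by omega
      rw [hk1, Nat.mod_self] at h; omega
  -- the neighbourhood of `u i₀`
  have hne1 : u' ≠ v i₀ := fun h => hu' (Or.inr ⟨i₀, hi₀bc, h⟩)
  have hne2 : u' ≠ v prev := fun h => hu' (Or.inr ⟨prev, hprev_lt, h⟩)
  have hne3 : v i₀ ≠ v prev := fun h => hprev_ne (hvinj prev hprev_lt i₀ hi₀bc h.symm)
  have hNsub : ({u', v i₀, v prev} : Finset V) ⊆ G.neighborFinset (u i₀) := by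
    intro y hy
    simp only [Finset.mem_insert, Finset.mem_singleton] at hy
    rw [SimpleGraph.mem_neighborFinset]
    rcases hy with rfl | rfl | rfl
    · exact hadj
    · exact hadj1 i₀ hi₀bc
    · exact hprev_adj.symm
  have hNcard : ({u', v i₀, v prev} : Finset V).card = 3 := by
    rw [Finset.card_insert_of_notMem (by simp [hne1, hne2]),
      Finset.card_insert_of_notMem (by simp [hne3]), Finset.card_singleton]
  have hdeg : (G.neighborFinset (u i₀)).card = 3 := hcubic (u i₀)
  have hNeq : G.neighborFinset (u i₀) = {u', v i₀, v prev} :=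
    (Finset.eq_of_subset_of_card_le hNsub (by rw [hdeg, hNcard])).symm
  have hnbr : ∀ y, G.Adj (u i₀) y → y = u' ∨ y = v i₀ ∨ y = v prev := by
    intro y hy
    have hmem : y ∈ G.neighborFinset (u i₀) := by
      rw [SimpleGraph.mem_neighborFinset]; exact hy
    rw [hNeq] at hmem
    simpa using hmem
  have hredi : u i₀ ∉ A ∧ u i₀ ∉ B := hured i₀ hi₀
  have huB : u' ∉ B := Finset.disjoint_left.mp hdisj huA
  have hRiso : ∀ z ∈ redSet A B, ¬ G.Adj (u i₀) z := fun z hz => hP1 z hz.1 hz.2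
  have haR : u i₀ ∈ redSet A B := ⟨hredi.1, hredi.2⟩
  -- the two auxiliary swap arguments
  have step0 : ¬ (∀ y, G.Adj (u i₀) y → y ∉ B) := by
    intro h
    have hind : FinsetIndep G (insert (u i₀) B) := by
      intro a ha b hb
      simp only [Finset.mem_insert] at ha hb
      rcases ha with rfl | ha <;> rcases hb with rfl | hb
      · exact G.loopless.irrefl _
      · exact fun hxy => h b hxy hb
      · exact fun hxy => h a hxy.symm ha
      · exact hB a ha b hb
    have hd : Disjoint A (insert (u i₀) B) := by
      rw [Finset.disjoint_insert_right]
      exact ⟨hredi.1, hdisj⟩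
    have := hmax A (insert (u i₀) B) hd hA hind
    rw [Finset.card_insert_of_notMem hredi.2] at this
    omega
  have step : ∀ x c', (∀ y, G.Adj (u i₀) y → y ∈ B → y = x) → x ∈ B →
      G.Adj x c' → c' ∉ A → c' ∉ B → c' ≠ u i₀ → False := by
    intro x c' hone hxB hxc hc'A hc'B hc'ne
    have huix : u i₀ ∉ B.erase x := fun h => hredi.2 (Finset.mem_of_mem_erase h)
    have hiJ2 : FinsetIndep G (insert (u i₀) (B.erase x)) := by
      intro a ha b hb
      simp only [Finset.mem_insert, Finset.mem_erase] at ha hb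
      rcases ha with rfl | ⟨hax, haB⟩ <;> rcases hb with rfl | ⟨hbx, hbB⟩
      · exact G.loopless.irrefl _
      · exact fun hxy => hbx (hone b hxy hbB)
      · exact fun hxy => hax (hone a hxy.symm haB)
      · exact hB a haB b hbB
    have hdJ2 : Disjoint A (insert (u i₀) (B.erase x)) := by
      rw [Finset.disjoint_insert_right]
      exact ⟨hredi.1, hdisj.mono_right (Finset.erase_subset _ _)⟩
    have hcard : (insert (u i₀) (B.erase x)).card = B.card := by
      rw [Finset.card_insert_of_notMem huix, Finset.card_erase_of_mem hxB]
      have : 0 < B.card := Finset.card_pos.mpr ⟨x, hxB⟩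
      omega
    have hCI : CondI G A (insert (u i₀) (B.erase x)) := by
      intro J1' J2' hd' h1' h2'
      rw [hcard]
      exact hmax J1' J2' hd' h1' h2'
    have hle := hmin A (insert (u i₀) (B.erase x)) hdJ2 hA hiJ2 hCI
    have hxA : x ∉ A := Finset.disjoint_right.mp hdisj hxB
    have hxui : x ≠ u i₀ := fun h => hredi.2 (h ▸ hxB)
    have hset : redSet A (insert (u i₀) (B.erase x)) =
        (redSet A B \ {u i₀}) ∪ {x} := by
      ext z
      simp only [redSet, Set.mem_setOf_eq, Finset.mem_insert, Finset.mem_erase,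
        Set.mem_union, Set.mem_diff, Set.mem_singleton_iff]
      constructor
      · rintro ⟨hzA, hz2⟩
        push_neg at hz2
        by_cases hzx : z = x
        · exact Or.inr hzx
        · exact Or.inl ⟨⟨hzA, hz2.2 hzx⟩, hz2.1⟩
      · rintro (⟨⟨hzA, hzB⟩, hzne⟩ | rfl)
        · exact ⟨hzA, by push_neg; exact ⟨hzne, fun _ => hzB⟩⟩
        · exact ⟨hxA, by push_neg; exact ⟨hxui, fun h => absurd rfl h⟩⟩
    have hlt : numRedComp G A (insert (u i₀) (B.erase x)) < numRedComp G A B := by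
      unfold numRedComp
      rw [hset]
      exact compCount_lt_of_swap G (redSet A B) (u i₀) x c' haR hRiso
        ⟨hc'A, hc'B⟩ hc'ne hxc
    omega
  -- both cycle-neighbours of `u i₀` lie in `B`
  have huprev_ne : u prev ≠ u i₀ := fun h => hprev_ne (huinj prev hprev_k i₀ hi₀ h)
  have hunxt_ne : u ((i₀ + 1) % k) ≠ u i₀ :=
    fun h => hnxt_ne (huinj _ hnxt_lt i₀ hi₀ h)
  have hviB : v i₀ ∈ B := by
    by_contra hvB'
    have hvA : v i₀ ∈ A := (hvblack i₀ hi₀bc).resolve_right hvB'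
    by_cases hp : v prev ∈ B
    · refine step (v prev) (u prev) ?_ hp (hadj1 prev hprev_lt).symm
        (hured prev hprev_k).1 (hured prev hprev_k).2 huprev_ne
      intro y hy hyB
      rcases hnbr y hy with rfl | rfl | rfl
      · exact absurd hyB huB
      · exact absurd hyB hvB'
      · rfl
    · refine step0 ?_
      intro y hy
      rcases hnbr y hy with rfl | rfl | rfl
      · exact huB
      · exact hvB'
      · exact hp
  have hvpB : v prev ∈ B := by
    by_contra hvB'
    have hvA : v prev ∈ A := (hvblack prev hprev_lt).resolve_right hvB'
    refine step (v i₀) (u ((i₀ + 1) % k)) ?_ hviB (hadj2 i₀ hi₀bc)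
      (hured _ hnxt_lt).1 (hured _ hnxt_lt).2 hunxt_ne
    intro y hy hyB
    rcases hnbr y hy with rfl | rfl | rfl
    · exact absurd hyB huB
    · rfl
    · exact absurd hyB hvB'
  -- the final switched pair
  have huiM : u i₀ ∉ A.erase u' := fun h => hredi.1 (Finset.mem_of_mem_erase h)
  have hMind : FinsetIndep G (insert (u i₀) (A.erase u')) := by
    intro a ha b hb
    simp only [Finset.mem_insert, Finset.mem_erase] at ha hb
    rcases ha with rfl | ⟨hau, haA⟩ <;> rcases hb with rfl | ⟨hbu, hbA⟩
    · exact G.loopless.irrefl _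
    · intro hxy
      rcases hnbr b hxy with rfl | rfl | rfl
      · exact hbu rfl
      · exact Finset.disjoint_left.mp hdisj hbA hviB
      · exact Finset.disjoint_left.mp hdisj hbA hvpB
    · intro hxy
      rcases hnbr a hxy.symm with rfl | rfl | rfl
      · exact hau rfl
      · exact Finset.disjoint_left.mp hdisj haA hviB
      · exact Finset.disjoint_left.mp hdisj haA hvpB
    · exact hA a haA b hbA
  have hMdisj : Disjoint (insert (u i₀) (A.erase u')) B := by
    rw [Finset.disjoint_insert_left]
    exact ⟨hredi.2, hdisj.mono_left (Finset.erase_subset _ _)⟩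
  have hMcard : (insert (u i₀) (A.erase u')).card = A.card := by
    rw [Finset.card_insert_of_notMem huiM, Finset.card_erase_of_mem huA]
    have : 0 < A.card := Finset.card_pos.mpr ⟨u', huA⟩
    omega
  have hMmax : CondI G (insert (u i₀) (A.erase u')) B := by
    intro J1' J2' hd' h1' h2'
    rw [hMcard]
    exact hmax J1' J2' hd' h1' h2'
  refine ⟨hMind, hMdisj, hMmax, ?_⟩
  intro J1' J2' hd' h1' h2' hci'
  have h1 := hmin J1' J2' hd' h1' h2' hci'
  have hneu : u i₀ ≠ u' := hadj.ne
  have hneu' : u' ≠ u i₀ := hadj.ne'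
  have hset2 : redSet (insert (u i₀) (A.erase u')) B =
      (redSet A B \ {u i₀}) ∪ {u'} := by
    ext z
    simp only [redSet, Set.mem_setOf_eq, Finset.mem_insert, Finset.mem_erase,
      Set.mem_union, Set.mem_diff, Set.mem_singleton_iff]
    constructor
    · rintro ⟨hz1, hzB⟩
      push_neg at hz1
      by_cases hzu : z = u'
      · exact Or.inr hzu
      · exact Or.inl ⟨⟨hz1.2 hzu, hzB⟩, hz1.1⟩
    · rintro (⟨⟨hzA, hzB⟩, hzne⟩ | rfl)
      · exact ⟨by push_neg; exact ⟨hzne, fun _ => hzA⟩, hzB⟩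
      · exact ⟨by push_neg; exact ⟨hneu', fun h => absurd rfl h⟩, huB⟩
  have h2 : numRedComp G (insert (u i₀) (A.erase u')) B ≤ numRedComp G A B := by
    unfold numRedComp
    rw [hset2]
    exact compCount_le_of_swap G (redSet A B) (u i₀) u' haR hRiso
  omega

/-- Under Conditions (I) and (II) and the cycle setup: if `u i₀` is a red `P1`
of `C'` (isolated among the red vertices in `G`) and `u'` is a neighbour of
`u i₀` off `C'` with `u' ∈ I_i`, then switching `u i₀` with `u'` again yields a
pair of disjoint independent sets satisfying Conditions (I) and (II). -/
theorem switch_redP1_preserves_conditions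
    {V : Type*} [Fintype V] [DecidableEq V] (G : SimpleGraph V) [DecidableRel G.Adj]
    (hconn : G.Connected) (hcubic : ∀ v : V, G.degree v = 3)
    (I1 I2 : Finset V) (hdisj : Disjoint I1 I2)
    (hI1 : FinsetIndep G I1) (hI2 : FinsetIndep G I2)
    (hmax : CondI G I1 I2) (hmin : CondII G I1 I2)
    (k : ℕ) (u v : ℕ → V) (p2 : Bool)
    (hcyc : CycleSetup G I1 I2 k u v p2)
    (i₀ : ℕ) (hi₀ : i₀ < k)
    (hP1 : ∀ y : V, y ∉ I1 → y ∉ I2 → ¬ G.Adj (u i₀) y)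
    (u' : V) (hadj : G.Adj (u i₀) u') (hu' : u' ∉ cycleVerts k u v p2) :
    (u' ∈ I1 →
      FinsetIndep G (insert (u i₀) (I1.erase u')) ∧
      Disjoint (insert (u i₀) (I1.erase u')) I2 ∧
      CondI G (insert (u i₀) (I1.erase u')) I2 ∧
      CondII G (insert (u i₀) (I1.erase u')) I2) ∧
    (u' ∈ I2 →
      FinsetIndep G (insert (u i₀) (I2.erase u')) ∧
      Disjoint I1 (insert (u i₀) (I2.erase u')) ∧
      CondI G I1 (insert (u i₀) (I2.erase u')) ∧
      CondII G I1 (insert (u i₀) (I2.erase u'))) := by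
  obtain ⟨hk, hured, hvblack, huinj, hvinj, huv, hadj1, hadj2, hp2, -⟩ := hcyc
  constructor
  · intro huA
    exact switch_aux G hcubic I1 I2 hdisj hI1 hI2 hmax hmin k u v p2 hk
      (fun i hi => hured i hi) hvblack huinj hvinj hadj1 hadj2 hp2 i₀ hi₀ hP1
      u' hadj hu' huA
  · intro huB
    obtain ⟨h1, h2, h3, h4⟩ := switch_aux G hcubic I2 I1 hdisj.symm hI2 hI1
      (condI_comm hmax) (condII_comm hmin) k u v p2 hk
      (fun i hi => ⟨(hured i hi).2, (hured i hi).1⟩)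
      (fun i hi => (hvblack i hi).symm) huinj hvinj hadj1 hadj2 hp2 i₀ hi₀
      (fun y hy2 hy1 => hP1 y hy1 hy2) u' hadj hu' huB
    exact ⟨h1, h2.symm, condI_comm h3, condII_comm h4⟩
end

section
/- Let G be a finite connected cubic graph and let (I1,I2) be a pair of disjoint independent sets satisfying Conditions (I) and (II). Suppose the cycle setup holds for C'. Then for indices i ≠ j, the red vertices ui and uj have no common neighbor in G outside V(C'), except possibly when {i,j} = {1,k} in the red-P2 case. -/
open SimpleGraph

variable {V : Type*}

lemma nat_card_lt_of_surj {α β : Type*} [Finite α] (f : α → β) (hsurj : Function.Surjective f)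
    (a1 a2 : α) (hne : a1 ≠ a2) (he : f a1 = f a2) : Nat.card β < Nat.card α := by
  have : Finite β := Finite.of_surjective f hsurj
  cases nonempty_fintype α
  cases nonempty_fintype β
  rw [Nat.card_eq_fintype_card, Nat.card_eq_fintype_card]
  exact Fintype.card_lt_of_surjective_not_injective f hsurj (fun hinj => hne (hinj he))

lemma comp_drop [Finite V] (G : SimpleGraph V) (R : Set V) (r s z : V)
    (hr : r ∈ R) (hz : z ∈ R) (hzr : z ≠ r) (hadj : G.Adj s z)
    (hiso : ∀ x ∈ R, ¬ G.Adj r x) :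
    Nat.card ((G.induce (insert s (R \ {r}))).ConnectedComponent) <
      Nat.card ((G.induce R).ConnectedComponent) := by
  classical
  set R' : Set V := insert s (R \ {r}) with hR'
  have hsR' : s ∈ R' := Set.mem_insert _ _
  have hmem : ∀ x ∈ R, x ≠ r → x ∈ R' := fun x hx hxr => Set.mem_insert_iff.mpr (Or.inr ⟨hx, hxr⟩)
  have φrel : ∀ (x y : R), (G.induce R).Adj x y →
      (G.induce R').Adj (if h : (x : V) = r then ⟨s, hsR'⟩ else ⟨x, hmem x x.2 h⟩)
        (if h : (y : V) = r then ⟨s, hsR'⟩ else ⟨y, hmem y y.2 h⟩) := by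
    intro x y hxy
    have hxy' : G.Adj (x : V) (y : V) := hxy
    by_cases hx : (x : V) = r
    · exact absurd (hx ▸ hxy') (hiso _ y.2)
    · by_cases hy : (y : V) = r
      · exact absurd (hy ▸ hxy'.symm) (hiso _ x.2)
      · rw [dif_neg hx, dif_neg hy]
        exact hxy'
  let φ : G.induce R →g G.induce R' :=
    ⟨fun x => if h : (x : V) = r then ⟨s, hsR'⟩ else ⟨x, hmem x x.2 h⟩, fun {x y} h => φrel x y h⟩
  let f : (G.induce R).ConnectedComponent → (G.induce R').ConnectedComponent :=
    ConnectedComponent.map φ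
  have hφr : φ ⟨r, hr⟩ = ⟨s, hsR'⟩ := dif_pos rfl
  have hφn : ∀ (x : V) (hx : x ∈ R) (hxr : x ≠ r), φ ⟨x, hx⟩ = ⟨x, hmem x hx hxr⟩ := by
    intro x hx hxr
    exact dif_neg hxr
  have hfr : f ((G.induce R).connectedComponentMk ⟨r, hr⟩) =
      (G.induce R').connectedComponentMk ⟨s, hsR'⟩ := by
    simp only [f, ConnectedComponent.map_mk, hφr]
  have hfnr : ∀ (x : V) (hx : x ∈ R) (hxr : x ≠ r),
      f ((G.induce R).connectedComponentMk ⟨x, hx⟩) =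
        (G.induce R').connectedComponentMk ⟨x, hmem x hx hxr⟩ := by
    intro x hx hxr
    simp only [f, ConnectedComponent.map_mk, hφn x hx hxr]
  have hsurj : Function.Surjective f := by
    intro c
    refine ConnectedComponent.ind (fun x' => ?_) c
    rcases Set.mem_insert_iff.mp x'.2 with h | h
    · refine ⟨(G.induce R).connectedComponentMk ⟨r, hr⟩, ?_⟩
      rw [hfr]
      congr 1
      exact Subtype.ext h.symm
    · refine ⟨(G.induce R).connectedComponentMk ⟨x', h.1⟩, ?_⟩
      rw [hfnr x' h.1 h.2]
  have hkey : f ((G.induce R).connectedComponentMk ⟨r, hr⟩) =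
      f ((G.induce R).connectedComponentMk ⟨z, hz⟩) := by
    rw [hfr, hfnr z hz hzr]
    exact ConnectedComponent.sound
      (Adj.reachable (by exact hadj : (G.induce R').Adj ⟨s, hsR'⟩ ⟨z, hmem z hz hzr⟩))
  have hne : (G.induce R).connectedComponentMk ⟨r, hr⟩ ≠
      (G.induce R).connectedComponentMk ⟨z, hz⟩ := by
    intro h
    obtain ⟨p⟩ := (ConnectedComponent.eq).mp h
    cases p with
    | nil => exact hzr rfl
    | cons ha _ => exact hiso _ (Subtype.prop _) ha
  exact nat_card_lt_of_surj f hsurj _ _ hne hkey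

/-- The generic exchange move: `r` is a red vertex, `c ∈ Q` is a black neighbour of `r`,
all other neighbours of `r` are neither in `Q` nor red, `r` has no red neighbour, and `c`
has a red neighbour `z ≠ r`.  Swapping `c` out of `Q` and `r` into `Q` keeps the sizes
and strictly decreases the number of red components; contradiction with Condition II. -/
lemma gen_move [Fintype V] [DecidableEq V] (G : SimpleGraph V) [DecidableRel G.Adj]
    (I1 I2 P Q : Finset V)
    (hdisjPQ : Disjoint P Q) (hP : FinsetIndep G P) (hQ : FinsetIndep G Q)
    (hcardPQ : P.card + Q.card = I1.card + I2.card)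
    (hredPQ : ∀ x : V, x ∈ redSet I1 I2 ↔ (x ∉ P ∧ x ∉ Q))
    (hmax : CondI G I1 I2) (hmin : CondII G I1 I2)
    (r c z : V) (hrred : r ∈ redSet I1 I2) (hcQ : c ∈ Q)
    (hnbr : ∀ x, G.Adj r x → x = c ∨ (x ∉ Q ∧ x ∉ redSet I1 I2))
    (hz : z ∈ redSet I1 I2) (hzr : z ≠ r) (hcz : G.Adj c z) : False := by
  classical
  have hrP : r ∉ P := ((hredPQ r).mp hrred).1
  have hrQ : r ∉ Q := ((hredPQ r).mp hrred).2
  have hcred : c ∉ redSet I1 I2 := fun h => ((hredPQ c).mp h).2 hcQ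
  have hcr : c ≠ r := fun h => hrQ (h ▸ hcQ)
  have hiso : ∀ x ∈ redSet I1 I2, ¬ G.Adj r x := by
    intro x hx hadj
    rcases hnbr x hadj with rfl | ⟨_, hxr⟩
    · exact hcred hx
    · exact hxr hx
  set J2 : Finset V := insert r (Q.erase c) with hJ2
  have hrQe : r ∉ Q.erase c := fun h => hrQ (Finset.mem_erase.mp h).2
  have hJ2card : J2.card = Q.card := by
    have h1 : 1 ≤ Q.card := Finset.card_pos.mpr ⟨c, hcQ⟩
    rw [hJ2, Finset.card_insert_of_notMem hrQe, Finset.card_erase_of_mem hcQ]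
    omega
  have hJ2indep : FinsetIndep G J2 := by
    intro x hx y hy
    rcases Finset.mem_insert.mp hx with rfl | hx' <;> rcases Finset.mem_insert.mp hy with rfl | hy'
    · exact G.loopless.irrefl _
    · intro hadj
      rcases hnbr y hadj with rfl | ⟨hyQ, _⟩
      · exact (Finset.mem_erase.mp hy').1 rfl
      · exact hyQ (Finset.mem_erase.mp hy').2
    · intro hadj
      rcases hnbr x hadj.symm with rfl | ⟨hxQ, _⟩
      · exact (Finset.mem_erase.mp hx').1 rfl
      · exact hxQ (Finset.mem_erase.mp hx').2
    · exact hQ x (Finset.mem_erase.mp hx').2 y (Finset.mem_erase.mp hy').2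
  have hJ2disj : Disjoint P J2 := by
    rw [hJ2, Finset.disjoint_insert_right]
    exact ⟨hrP, Finset.disjoint_of_subset_right (Finset.erase_subset _ _) hdisjPQ⟩
  have hcardJ : P.card + J2.card = I1.card + I2.card := by rw [hJ2card]; exact hcardPQ
  have hcondIJ : CondI G P J2 := by
    intro K1 K2 hd h1 h2
    rw [hcardJ]
    exact hmax K1 K2 hd h1 h2
  have hminJ := hmin P J2 hJ2disj hP hJ2indep hcondIJ
  have hset : redSet P J2 = insert c (redSet I1 I2 \ {r}) := by
    ext x
    simp only [redSet, Set.mem_setOf_eq, Set.mem_insert_iff, Set.mem_diff,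
      Set.mem_singleton_iff, hJ2, Finset.mem_insert, Finset.mem_erase]
    constructor
    · rintro ⟨hxP, hxJ⟩
      push_neg at hxJ
      obtain ⟨hxr, hxQ⟩ := hxJ
      by_cases hxc : x = c
      · exact Or.inl hxc
      · exact Or.inr ⟨(hredPQ x).mpr ⟨hxP, fun h => (hxQ hxc) h⟩, hxr⟩
    · rintro (rfl | ⟨hxred, hxr⟩)
      · exact ⟨Finset.disjoint_right.mp hdisjPQ hcQ, by
          push_neg
          exact ⟨hcr, fun h => absurd rfl h⟩⟩
      · obtain ⟨hxP, hxQ⟩ := (hredPQ x).mp hxred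
        exact ⟨hxP, by push_neg; exact ⟨hxr, fun _ => hxQ⟩⟩
  have hdrop : numRedComp G P J2 < numRedComp G I1 I2 := by
    unfold numRedComp
    rw [hset]
    exact comp_drop G (redSet I1 I2) r c z hrred hz hzr hcz hiso
  omega

lemma main_aux {V : Type*} [Fintype V] [DecidableEq V] (G : SimpleGraph V) [DecidableRel G.Adj]
    (hcubic : ∀ v : V, G.degree v = 3)
    (I1 I2 : Finset V)
    (hmax : CondI G I1 I2) (hmin : CondII G I1 I2)
    (k : ℕ) (u v : ℕ → V) (p2 : Bool)
    (hcyc : CycleSetup G I1 I2 k u v p2)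
    (X Y : Finset V)
    (hdXY : Disjoint X Y) (hIndX : FinsetIndep G X) (hIndY : FinsetIndep G Y)
    (hcardXY : X.card + Y.card = I1.card + I2.card)
    (hredXY : ∀ x : V, x ∈ redSet I1 I2 ↔ (x ∉ X ∧ x ∉ Y))
    (i j : ℕ) (hi : i < k) (hj : j < k) (hij : i ≠ j)
    (hgen : p2 = true → (i ≠ 0 ∧ i ≠ k - 1))
    (w : V) (hw : w ∉ cycleVerts k u v p2) (hwX : w ∈ X)
    (hadji : G.Adj (u i) w) (hadjj : G.Adj (u j) w) : False := by
  classical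
  obtain ⟨hk3, hured, hvblack, huinj, hvinj, huv, hadjuv, hadjvu, hp2adj, hcomp⟩ := hcyc
  -- the predecessor index m
  obtain ⟨m, hmk, hmb, hmi, hsucc⟩ :
      ∃ m, m < k ∧ m < blackCount k p2 ∧ m ≠ i ∧ (m + 1) % k = i := by
    have hbc : blackCount k p2 = k ∨ (p2 = true ∧ blackCount k p2 = k - 1) := by
      cases p2 <;> simp [blackCount]
    by_cases hi0 : i = 0
    · refine ⟨k - 1, by omega, ?_, by omega, ?_⟩
      · rcases hbc with h | ⟨hp, h⟩
        · omega
        · exact absurd hi0 (hgen hp).1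
      · rw [Nat.sub_add_cancel (by omega), Nat.mod_self, hi0]
    · refine ⟨i - 1, by omega, ?_, by omega, ?_⟩
      · rcases hbc with h | ⟨hp, h⟩
        · omega
        · have := (hgen hp).2; omega
      · rw [(by omega : i - 1 + 1 = i), Nat.mod_eq_of_lt hi]
  have hib : i < blackCount k p2 := by
    have hbc : blackCount k p2 = k ∨ (p2 = true ∧ blackCount k p2 = k - 1) := by
      cases p2 <;> simp [blackCount]
    rcases hbc with h | ⟨hp, h⟩
    · omega
    · have := (hgen hp).2; omega
  set a := v m with ha_def
  set b := v i with hb_def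
  have hAdj_a : G.Adj (u i) a := by
    have h := hadjvu m hmb
    rw [hsucc] at h
    exact h.symm
  have hAdj_b : G.Adj (u i) b := hadjuv i hib
  have hab : a ≠ b := fun h => hmi (hvinj m hmb i hib h)
  have hwa : w ≠ a := fun h => hw (Or.inr ⟨m, hmb, h⟩)
  have hwb : w ≠ b := fun h => hw (Or.inr ⟨i, hib, h⟩)
  -- the neighbourhood of u i is exactly {a, b, w}
  have hnbr3 : ∀ x, G.Adj (u i) x → x = a ∨ x = b ∨ x = w := by
    intro x hx
    have hNcard : (G.neighborFinset (u i)).card = 3 := by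
      rw [G.card_neighborFinset_eq_degree]; exact hcubic _
    have hsub : ({a, b, w} : Finset V) ⊆ G.neighborFinset (u i) := by
      intro t ht
      rcases Finset.mem_insert.mp ht with rfl | ht'
      · exact (G.mem_neighborFinset _ _).mpr hAdj_a
      rcases Finset.mem_insert.mp ht' with rfl | ht''
      · exact (G.mem_neighborFinset _ _).mpr hAdj_b
      · rw [Finset.mem_singleton] at ht''
        subst ht''
        exact (G.mem_neighborFinset _ _).mpr hadji
    have hScard : ({a, b, w} : Finset V).card = 3 := by
      rw [Finset.card_insert_of_notMem (by simp [hab, hwa.symm]),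
        Finset.card_insert_of_notMem (by simp [hwb.symm]), Finset.card_singleton]
    have heq : G.neighborFinset (u i) = {a, b, w} :=
      (Finset.eq_of_subset_of_card_le hsub (by omega)).symm
    have : x ∈ G.neighborFinset (u i) := (G.mem_neighborFinset _ _).mpr hx
    rw [heq] at this
    simpa using this
  have hanotred : a ∉ redSet I1 I2 := by
    rcases hvblack m hmb with h | h <;> exact fun hr => by simp [redSet] at hr; tauto
  have hbnotred : b ∉ redSet I1 I2 := by
    rcases hvblack i hib with h | h <;> exact fun hr => by simp [redSet] at hr; tauto
  have hwnotred : w ∉ redSet I1 I2 := fun hr => ((hredXY w).mp hr).1 hwX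
  have hwnotY : w ∉ Y := Finset.disjoint_left.mp hdXY hwX
  have huired : u i ∈ redSet I1 I2 := hured i hi
  -- Fact 1 : u i has a neighbour in Y
  have hY2 : a ∈ Y ∨ b ∈ Y := by
    by_contra hcon
    push_neg at hcon
    obtain ⟨haY, hbY⟩ := hcon
    have huiY : u i ∉ Y := ((hredXY _).mp huired).2
    have hindep : FinsetIndep G (insert (u i) Y) := by
      intro x hx y hy
      rcases Finset.mem_insert.mp hx with rfl | hx' <;>
        rcases Finset.mem_insert.mp hy with rfl | hy'
      · exact G.loopless.irrefl _
      · intro hadj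
        rcases hnbr3 y hadj with rfl | rfl | rfl
        · exact haY hy'
        · exact hbY hy'
        · exact hwnotY hy'
      · intro hadj
        rcases hnbr3 x hadj.symm with rfl | rfl | rfl
        · exact haY hx'
        · exact hbY hx'
        · exact hwnotY hx'
      · exact hIndY x hx' y hy'
    have hdisj' : Disjoint X (insert (u i) Y) := by
      rw [Finset.disjoint_insert_right]
      exact ⟨((hredXY _).mp huired).1, hdXY⟩
    have hle := hmax X (insert (u i) Y) hdisj' hIndX hindep
    rw [Finset.card_insert_of_notMem huiY] at hle
    omega
  -- successor index facts (for case B1)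
  have hsik : (i + 1) % k < k := Nat.mod_lt _ (by omega)
  have hsine : (i + 1) % k ≠ i := by
    by_cases h : i + 1 = k
    · rw [h, Nat.mod_self]; omega
    · rw [Nat.mod_eq_of_lt (by omega)]; omega
  by_cases haY : a ∈ Y <;> by_cases hbY : b ∈ Y
  · -- Case A : both a and b in Y; move w out of X, u i into X; companion z = u j
    refine gen_move G I1 I2 Y X hdXY.symm hIndY hIndX (by omega)
      (fun x => by rw [hredXY x]; exact and_comm) hmax hmin
      (u i) w (u j) huired hwX ?_ (hured j hj)
      (fun h => hij (huinj j hj i hi h).symm) hadjj.symm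
    intro x hx
    rcases hnbr3 x hx with rfl | rfl | rfl
    · exact Or.inr ⟨Finset.disjoint_right.mp hdXY haY, hanotred⟩
    · exact Or.inr ⟨Finset.disjoint_right.mp hdXY hbY, hbnotred⟩
    · exact Or.inl rfl
  · -- Case B2 : a ∈ Y, b ∉ Y; move a out of Y, u i into Y; companion z = u m
    refine gen_move G I1 I2 X Y hdXY hIndX hIndY hcardXY hredXY hmax hmin
      (u i) a (u m) huired haY ?_ (hured m hmk)
      (fun h => hmi (huinj m hmk i hi h)) (hadjuv m hmb).symm
    intro x hx
    rcases hnbr3 x hx with rfl | rfl | rfl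
    · exact Or.inl rfl
    · exact Or.inr ⟨hbY, hbnotred⟩
    · exact Or.inr ⟨hwnotY, hwnotred⟩
  · -- Case B1 : b ∈ Y, a ∉ Y; move b out of Y, u i into Y; companion z = u ((i+1)%k)
    refine gen_move G I1 I2 X Y hdXY hIndX hIndY hcardXY hredXY hmax hmin
      (u i) b (u ((i + 1) % k)) huired hbY ?_ (hured _ hsik)
      (fun h => hsine (huinj _ hsik i hi h)) (hadjvu i hib)
    intro x hx
    rcases hnbr3 x hx with rfl | rfl | rfl
    · exact Or.inr ⟨haY, hanotred⟩
    · exact Or.inl rfl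
    · exact Or.inr ⟨hwnotY, hwnotred⟩
  · exact absurd hY2 (by tauto)

/-- Under Conditions (I) and (II) and the cycle setup: for `i ≠ j`, the red
vertices `u i` and `u j` have no common neighbour outside `C'`, except possibly
for the pair `{u 0, u (k-1)}` in the red-`P2` case. -/
theorem no_common_neighbor_of_red_vertices
    {V : Type*} [Fintype V] [DecidableEq V] (G : SimpleGraph V) [DecidableRel G.Adj]
    (hconn : G.Connected) (hcubic : ∀ v : V, G.degree v = 3)
    (I1 I2 : Finset V) (hdisj : Disjoint I1 I2)
    (hI1 : FinsetIndep G I1) (hI2 : FinsetIndep G I2)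
    (hmax : CondI G I1 I2) (hmin : CondII G I1 I2)
    (k : ℕ) (u v : ℕ → V) (p2 : Bool)
    (hcyc : CycleSetup G I1 I2 k u v p2)
    (i j : ℕ) (hi : i < k) (hj : j < k) (hij : i ≠ j)
    (hexc : ¬ (p2 = true ∧ ((i = 0 ∧ j = k - 1) ∨ (i = k - 1 ∧ j = 0)))) :
    ¬ ∃ w : V, w ∉ cycleVerts k u v p2 ∧ G.Adj (u i) w ∧ G.Adj (u j) w := by
  rintro ⟨w, hw, hadjiw, hadjjw⟩
  have hured := hcyc.2.1
  obtain ⟨c, hsupp⟩ := hcyc.2.2.2.2.2.2.2.2.2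
  -- w is black
  have hwblack : w ∈ I1 ∨ w ∈ I2 := by
    by_contra hcon
    push_neg at hcon
    have hwred : w ∈ redSet I1 I2 := ⟨hcon.1, hcon.2⟩
    have hmki : (Hgraph G I1 I2).connectedComponentMk ⟨u i, hured i hi⟩ = c := by
      have hxi : (⟨u i, hured i hi⟩ : redSet I1 I2) ∈ c.supp := by
        rw [hsupp]; exact ⟨i, hi, rfl⟩
      exact hxi
    have hHadj : (Hgraph G I1 I2).Adj ⟨u i, hured i hi⟩ ⟨w, hwred⟩ := by
      refine ⟨fun h => hadjiw.ne (congrArg Subtype.val h), ?_⟩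
      calc G.edist (u i) w = 1 := edist_eq_one_iff_adj.mpr hadjiw
        _ ≤ 2 := by norm_num
    have hmem : (⟨w, hwred⟩ : redSet I1 I2) ∈ c.supp := by
      rw [ConnectedComponent.mem_supp_iff, ← hmki]
      exact ConnectedComponent.connectedComponentMk_eq_of_adj hHadj.symm
    rw [hsupp] at hmem
    obtain ⟨l, hl, hleq⟩ := hmem
    exact hw (Or.inl ⟨l, hl, hleq⟩)
  have hgen_or : (p2 = true → i ≠ 0 ∧ i ≠ k - 1) ∨ (p2 = true → j ≠ 0 ∧ j ≠ k - 1) := by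
    by_cases hp : p2 = true
    · by_cases h1 : i = 0
      · right
        intro _
        exact ⟨fun hj0 => hij (h1.trans hj0.symm), fun hjk => hexc ⟨hp, Or.inl ⟨h1, hjk⟩⟩⟩
      · by_cases h2 : i = k - 1
        · right
          intro _
          exact ⟨fun hj0 => hexc ⟨hp, Or.inr ⟨h2, hj0⟩⟩, fun hjk => hij (h2.trans hjk.symm)⟩
        · left
          intro _
          exact ⟨h1, h2⟩
    · left
      intro h
      exact absurd h hp
  have hred12 : ∀ x : V, x ∈ redSet I1 I2 ↔ (x ∉ I1 ∧ x ∉ I2) := fun x => Iff.rfl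
  have hred21 : ∀ x : V, x ∈ redSet I1 I2 ↔ (x ∉ I2 ∧ x ∉ I1) := fun x => by
    rw [hred12 x]; exact and_comm
  rcases hwblack with hw1 | hw2 <;> rcases hgen_or with hg | hg
  · exact main_aux G hcubic I1 I2 hmax hmin k u v p2 hcyc I1 I2 hdisj hI1 hI2 rfl hred12
      i j hi hj hij hg w hw hw1 hadjiw hadjjw
  · exact main_aux G hcubic I1 I2 hmax hmin k u v p2 hcyc I1 I2 hdisj hI1 hI2 rfl hred12
      j i hj hi hij.symm hg w hw hw1 hadjjw hadjiw
  · exact main_aux G hcubic I1 I2 hmax hmin k u v p2 hcyc I2 I1 hdisj.symm hI2 hI1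
      (by omega) hred21 i j hi hj hij hg w hw hw2 hadjiw hadjjw
  · exact main_aux G hcubic I1 I2 hmax hmin k u v p2 hcyc I2 I1 hdisj.symm hI2 hI1
      (by omega) hred21 j i hj hi hij.symm hg w hw hw2 hadjjw hadjiw
end

section
/- Let G be a finite connected cubic graph containing ten distinct vertices x, u, v, w, u1, u2, v1, v2, w1, w2 such that G contains the edges xu, xv, xw, uu1, uu2, vv1, vv2, ww1, ww2, u1v2, u2v1, u1w2, u2w1, v1w2, v2w1. Then G is isomorphic to the Petersen graph. -/
open SimpleGraph

instance : DecidableRel petersenGraph.Adj := fun a b => by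
  unfold petersenGraph; infer_instance

/-- The labelling of the ten configuration vertices by vertices of the
Petersen graph. -/
def petersenLabels : Fin 10 → {s : Finset (Fin 5) // s.card = 2} :=
  ![⟨{0,1}, rfl⟩, ⟨{2,3}, rfl⟩, ⟨{2,4}, rfl⟩, ⟨{3,4}, rfl⟩,
    ⟨{0,4}, rfl⟩, ⟨{1,4}, rfl⟩, ⟨{0,3}, rfl⟩, ⟨{1,3}, rfl⟩,
    ⟨{0,2}, rfl⟩, ⟨{1,2}, rfl⟩]

lemma petersenLabels_bij : Function.Bijective petersenLabels := by decide

/-- In a graph where `a` has degree 3 and `b, c, d` are three distinct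
neighbours of `a`, every neighbour of `a` is one of `b, c, d`. -/
lemma adj_eq_of_degree_three {V : Type*} [Fintype V] [DecidableEq V]
    (G : SimpleGraph V) [DecidableRel G.Adj]
    {a b c d : V} (hd : G.degree a = 3) (h1 : G.Adj a b) (h2 : G.Adj a c) (h3 : G.Adj a d)
    (hbc : b ≠ c) (hbd : b ≠ d) (hcd : c ≠ d) :
    ∀ e, G.Adj a e → e = b ∨ e = c ∨ e = d := by
  intro e he
  have hsub : ({b, c, d} : Finset V) ⊆ G.neighborFinset a := by
    intro z hz
    simp only [Finset.mem_insert, Finset.mem_singleton] at hz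
    rcases hz with rfl|rfl|rfl <;> simpa [mem_neighborFinset]
  have hcard : ({b,c,d} : Finset V).card = 3 := by
    rw [Finset.card_insert_of_notMem (by simp [hbc, hbd]),
        Finset.card_insert_of_notMem (by simp [hcd])]
    simp
  have heq := Finset.eq_of_subset_of_card_le hsub (by rw [hcard, ← hd]; rfl)
  have : e ∈ ({b,c,d} : Finset V) := by rw [heq]; simpa [mem_neighborFinset]
  simpa using this

/-- A finite connected cubic graph containing the configuration of
Lemma 6 (a claw `x;u,v,w` whose outer neighbours are matched crosswise)
is isomorphic to the Petersen graph. -/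
theorem petersen_of_claw_configuration
    {V : Type*} [Fintype V] [DecidableEq V] (G : SimpleGraph V) [DecidableRel G.Adj]
    (hconn : G.Connected) (hcubic : ∀ a : V, G.degree a = 3)
    (x u v w u1 u2 v1 v2 w1 w2 : V)
    (hdistinct : ([x, u, v, w, u1, u2, v1, v2, w1, w2] : List V).Pairwise (· ≠ ·))
    (hxu : G.Adj x u) (hxv : G.Adj x v) (hxw : G.Adj x w)
    (huu1 : G.Adj u u1) (huu2 : G.Adj u u2)
    (hvv1 : G.Adj v v1) (hvv2 : G.Adj v v2)
    (hww1 : G.Adj w w1) (hww2 : G.Adj w w2)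
    (h1 : G.Adj u1 v2) (h2 : G.Adj u2 v1)
    (h3 : G.Adj u1 w2) (h4 : G.Adj u2 w1)
    (h5 : G.Adj v1 w2) (h6 : G.Adj v2 w1) :
    Nonempty (G ≃g petersenGraph) := by
  let l : List V := [x, u, v, w, u1, u2, v1, v2, w1, w2]
  let vs : Fin 10 → V := fun i => l.get (Fin.cast rfl i)
  have hinj : Function.Injective vs := by
    intro a b hab
    have h2 := List.nodup_iff_injective_get.mp (hdistinct : l.Nodup) hab
    exact Fin.ext (congrArg Fin.val h2)
  have ne : ∀ i j : Fin 10, i ≠ j → vs i ≠ vs j := fun i j hij h => hij (hinj h)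
  have adj_mem : ∀ (i : Fin 10) (q : V), G.Adj (vs i) q →
      ∃ j, vs j = q ∧ petersenGraph.Adj (petersenLabels i) (petersenLabels j) := by
    intro i q h
    fin_cases i
    · rcases adj_eq_of_degree_three G (hcubic x) hxu hxv hxw
        (ne 1 2 (by decide)) (ne 1 3 (by decide)) (ne 2 3 (by decide)) q h with rfl|rfl|rfl
      exacts [⟨1, rfl, by decide⟩, ⟨2, rfl, by decide⟩, ⟨3, rfl, by decide⟩]
    · rcases adj_eq_of_degree_three G (hcubic u) hxu.symm huu1 huu2
        (ne 0 4 (by decide)) (ne 0 5 (by decide)) (ne 4 5 (by decide)) q h with rfl|rfl|rfl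
      exacts [⟨0, rfl, by decide⟩, ⟨4, rfl, by decide⟩, ⟨5, rfl, by decide⟩]
    · rcases adj_eq_of_degree_three G (hcubic v) hxv.symm hvv1 hvv2
        (ne 0 6 (by decide)) (ne 0 7 (by decide)) (ne 6 7 (by decide)) q h with rfl|rfl|rfl
      exacts [⟨0, rfl, by decide⟩, ⟨6, rfl, by decide⟩, ⟨7, rfl, by decide⟩]
    · rcases adj_eq_of_degree_three G (hcubic w) hxw.symm hww1 hww2
        (ne 0 8 (by decide)) (ne 0 9 (by decide)) (ne 8 9 (by decide)) q h with rfl|rfl|rfl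
      exacts [⟨0, rfl, by decide⟩, ⟨8, rfl, by decide⟩, ⟨9, rfl, by decide⟩]
    · rcases adj_eq_of_degree_three G (hcubic u1) huu1.symm h1 h3
        (ne 1 7 (by decide)) (ne 1 9 (by decide)) (ne 7 9 (by decide)) q h with rfl|rfl|rfl
      exacts [⟨1, rfl, by decide⟩, ⟨7, rfl, by decide⟩, ⟨9, rfl, by decide⟩]
    · rcases adj_eq_of_degree_three G (hcubic u2) huu2.symm h2 h4
        (ne 1 6 (by decide)) (ne 1 8 (by decide)) (ne 6 8 (by decide)) q h with rfl|rfl|rfl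
      exacts [⟨1, rfl, by decide⟩, ⟨6, rfl, by decide⟩, ⟨8, rfl, by decide⟩]
    · rcases adj_eq_of_degree_three G (hcubic v1) hvv1.symm h2.symm h5
        (ne 2 5 (by decide)) (ne 2 9 (by decide)) (ne 5 9 (by decide)) q h with rfl|rfl|rfl
      exacts [⟨2, rfl, by decide⟩, ⟨5, rfl, by decide⟩, ⟨9, rfl, by decide⟩]
    · rcases adj_eq_of_degree_three G (hcubic v2) hvv2.symm h1.symm h6
        (ne 2 4 (by decide)) (ne 2 8 (by decide)) (ne 4 8 (by decide)) q h with rfl|rfl|rfl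
      exacts [⟨2, rfl, by decide⟩, ⟨4, rfl, by decide⟩, ⟨8, rfl, by decide⟩]
    · rcases adj_eq_of_degree_three G (hcubic w1) hww1.symm h4.symm h6.symm
        (ne 3 5 (by decide)) (ne 3 7 (by decide)) (ne 5 7 (by decide)) q h with rfl|rfl|rfl
      exacts [⟨3, rfl, by decide⟩, ⟨5, rfl, by decide⟩, ⟨7, rfl, by decide⟩]
    · rcases adj_eq_of_degree_three G (hcubic w2) hww2.symm h3.symm h5.symm
        (ne 3 4 (by decide)) (ne 3 6 (by decide)) (ne 4 6 (by decide)) q h with rfl|rfl|rfl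
      exacts [⟨3, rfl, by decide⟩, ⟨4, rfl, by decide⟩, ⟨6, rfl, by decide⟩]
  have key : ∀ i j : Fin 10, G.Adj (vs i) (vs j) ↔
      petersenGraph.Adj (petersenLabels i) (petersenLabels j) := by
    intro i j
    constructor
    · intro h
      obtain ⟨j', hj', hp⟩ := adj_mem i (vs j) h
      rw [hinj hj'] at hp
      exact hp
    · intro h
      fin_cases i <;> fin_cases j <;>
        first
          | exact hxu | exact hxv | exact hxw
          | exact hxu.symm | exact hxv.symm | exact hxw.symm
          | exact huu1 | exact huu2 | exact hvv1 | exact hvv2 | exact hww1 | exact hww2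
          | exact huu1.symm | exact huu2.symm | exact hvv1.symm | exact hvv2.symm
          | exact hww1.symm | exact hww2.symm
          | exact h1 | exact h2 | exact h3 | exact h4 | exact h5 | exact h6
          | exact h1.symm | exact h2.symm | exact h3.symm | exact h4.symm
          | exact h5.symm | exact h6.symm
          | exact absurd h (by decide)
  have hstep : ∀ {p q : V}, G.Walk p q → (∃ i, vs i = p) → ∃ i, vs i = q := by
    intro p q hw
    induction hw with
    | nil => exact id
    | cons ha _ ih =>
        rintro ⟨i, rfl⟩
        exact ih ((adj_mem i _ ha).imp fun j hj => hj.1)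
  have hsurj : Function.Surjective vs := by
    intro y
    exact hstep ((hconn.preconnected x y).some) ⟨0, rfl⟩
  let eV : Fin 10 ≃ V := Equiv.ofBijective vs ⟨hinj, hsurj⟩
  let eP : Fin 10 ≃ {s : Finset (Fin 5) // s.card = 2} :=
    Equiv.ofBijective petersenLabels petersenLabels_bij
  refine ⟨(RelIso.symm ⟨eP.symm.trans eV, ?_⟩ : G ≃g petersenGraph)⟩
  intro a b
  show G.Adj (vs (eP.symm a)) (vs (eP.symm b)) ↔ petersenGraph.Adj a b
  rw [key, show petersenLabels (eP.symm a) = a from eP.apply_symm_apply a,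
      show petersenLabels (eP.symm b) = b from eP.apply_symm_apply b]
end
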